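/- arXiv:1906.10005 — 2 statements merged into one kernel-verified Lean document; each statement's English description precedes it below -/
import Mathlib

section
/- Correctness and size of the flat fixed-point reduction (method FPF): given a QCTL formula Φ, a Kripke structure K = (V,E,ℓ) and a state x, the QBF formula FPC(Flat(Φ))-hat^x obtained by applying the basic translation rules and the AG-rule is valid if and only if K,x ⊨ Φ; moreover its size is in O(|V|·(|V|+|E|)·|Φ|). -/
open Classical

/-- Syntax of QCTL: `φ ::= q | ¬φ | φ∨ψ | EX φ | E φ U ψ | A φ U ψ | ∃p.φ`. -/
inductive QCTL (AP : Type) : Type where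
  | atom : AP → QCTL AP
  | qneg : QCTL AP → QCTL AP
  | qor  : QCTL AP → QCTL AP → QCTL AP
  | qEX  : QCTL AP → QCTL AP
  | qEU  : QCTL AP → QCTL AP → QCTL AP
  | qAU  : QCTL AP → QCTL AP → QCTL AP
  | qexi : AP → QCTL AP → QCTL AP

/-- A Kripke structure over atomic propositions `AP` with (finite) state space `V`:
a serial edge relation and a labelling function. -/
structure Kripke (AP V : Type) where
  E : V → V → Prop
  serial : ∀ v, ∃ w, E v w
  label : V → Set AP

variable {AP V : Type}

/-- `K'` agrees with `K` (same edges) except possibly on the labelling of `p`. -/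
def Kripke.AgreeExcept (K K' : Kripke AP V) (p : AP) : Prop :=
  K'.E = K.E ∧ ∀ v q, q ≠ p → (q ∈ K'.label v ↔ q ∈ K.label v)

/-- Structure semantics of QCTL. -/
def QCTL.sat : QCTL AP → Kripke AP V → V → Prop
  | .atom p, K, x => p ∈ K.label x
  | .qneg φ, K, x => ¬ φ.sat K x
  | .qor φ ψ, K, x => φ.sat K x ∨ ψ.sat K x
  | .qEX φ, K, x => ∃ y, K.E x y ∧ φ.sat K y
  | .qEU φ ψ, K, x => ∃ ρ : ℕ → V, ρ 0 = x ∧ (∀ i, K.E (ρ i) (ρ (i + 1))) ∧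
      ∃ i, ψ.sat K (ρ i) ∧ ∀ j < i, φ.sat K (ρ j)
  | .qAU φ ψ, K, x => ∀ ρ : ℕ → V, ρ 0 = x → (∀ i, K.E (ρ i) (ρ (i + 1))) →
      ∃ i, ψ.sat K (ρ i) ∧ ∀ j < i, φ.sat K (ρ j)
  | .qexi p φ, K, x => ∃ K' : Kripke AP V, K.AgreeExcept K' p ∧ φ.sat K' x

namespace QCTL

def qand (φ ψ : QCTL AP) : QCTL AP := qneg (qor (qneg φ) (qneg ψ))
def qimp (φ ψ : QCTL AP) : QCTL AP := qor (qneg φ) ψ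
def qiff (φ ψ : QCTL AP) : QCTL AP := qand (qimp φ ψ) (qimp ψ φ)
def qtop [Inhabited AP] : QCTL AP := qor (atom default) (qneg (atom default))
def qbot [Inhabited AP] : QCTL AP := qneg qtop
def qAX (φ : QCTL AP) : QCTL AP := qneg (qEX (qneg φ))
def qEF [Inhabited AP] (φ : QCTL AP) : QCTL AP := qEU qtop φ
def qAG [Inhabited AP] (φ : QCTL AP) : QCTL AP := qneg (qEF (qneg φ))
def qall (p : AP) (φ : QCTL AP) : QCTL AP := qneg (qexi p (qneg φ))

/-- All atomic propositions occurring in a formula (free or bound). -/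
def atoms : QCTL AP → Set AP
  | atom p => {p}
  | qneg φ => φ.atoms
  | qor φ ψ => φ.atoms ∪ ψ.atoms
  | qEX φ => φ.atoms
  | qEU φ ψ => φ.atoms ∪ ψ.atoms
  | qAU φ ψ => φ.atoms ∪ ψ.atoms
  | qexi p φ => insert p φ.atoms

/-- Size of a formula. -/
def qsize : QCTL AP → ℕ
  | atom _ => 1
  | qneg φ => φ.qsize + 1
  | qor φ ψ => φ.qsize + ψ.qsize + 1
  | qEX φ => φ.qsize + 1
  | qEU φ ψ => φ.qsize + ψ.qsize + 1
  | qAU φ ψ => φ.qsize + ψ.qsize + 1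
  | qexi _ φ => φ.qsize + 1

end QCTL

/-- Equivalence of two QCTL formulas: same truth value at every state of every
(finite) Kripke structure. -/
def QEquiv (φ ψ : QCTL AP) : Prop :=
  ∀ (V : Type) [Fintype V] (K : Kripke AP V) (x : V), φ.sat K x ↔ ψ.sat K x

/-- `∃p₁.…∃pₙ.φ` for a list of atomic propositions. -/
def exiMany {AP : Type} (l : List AP) (φ : QCTL AP) : QCTL AP := l.foldr QCTL.qexi φ

/-- Conjunction of a list of formulas, with a final base conjunct. -/
def conjList {AP : Type} (l : List (QCTL AP)) (base : QCTL AP) : QCTL AP :=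
  l.foldr QCTL.qand base

/-- Disjunction of a list of formulas, with a final base disjunct. -/
def disjList {AP : Type} (l : List (QCTL AP)) (base : QCTL AP) : QCTL AP :=
  l.foldr QCTL.qor base
/-- Boolean combinations of atomic propositions. -/
inductive BoolAtoms {AP : Type} : QCTL AP → Prop where
  | atom (p : AP) : BoolAtoms (QCTL.atom p)
  | qneg {φ} : BoolAtoms φ → BoolAtoms (QCTL.qneg φ)
  | qor {φ ψ} : BoolAtoms φ → BoolAtoms ψ → BoolAtoms (QCTL.qor φ ψ)

/-- Basic CTL formulas: `EX α`, `E α U β` or `A α U β` with `α`, `β` Boolean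
combinations of atomic propositions. -/
inductive BasicCTL {AP : Type} : QCTL AP → Prop where
  | qEX {α} : BoolAtoms α → BasicCTL (QCTL.qEX α)
  | qEU {α β} : BoolAtoms α → BoolAtoms β → BasicCTL (QCTL.qEU α β)
  | qAU {α β} : BoolAtoms α → BoolAtoms β → BasicCTL (QCTL.qAU α β)

/-- Boolean combinations of basic CTL formulas (and of atomic propositions). -/
inductive BoolCombBasic {AP : Type} : QCTL AP → Prop where
  | basic {φ} : BasicCTL φ → BoolCombBasic φ
  | atom (p : AP) : BoolCombBasic (QCTL.atom p)
  | qneg {φ} : BoolCombBasic φ → BoolCombBasic (QCTL.qneg φ)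
  | qor {φ ψ} : BoolCombBasic φ → BoolCombBasic ψ → BoolCombBasic (QCTL.qor φ ψ)

/-- Quantifier-free QCTL formulas, i.e. CTL formulas. -/
def QCTL.quantFree {AP : Type} : QCTL AP → Prop
  | .atom _ => True
  | .qneg φ => φ.quantFree
  | .qor φ ψ => φ.quantFree ∧ ψ.quantFree
  | .qEX φ => φ.quantFree
  | .qEU φ ψ => φ.quantFree ∧ ψ.quantFree
  | .qAU φ ψ => φ.quantFree ∧ ψ.quantFree
  | .qexi _ _ => False

/-- The body `Φ₀ ∧ ⋀_{i=1..m} AG( κᵢ ↔ θᵢ )` of a flat formula. -/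
def flatBody {AP : Type} [Inhabited AP] (m : ℕ) (κ : Fin m → AP)
    (Φ0 : QCTL AP) (θ : Fin m → QCTL AP) : QCTL AP :=
  conjList
    ((List.finRange m).map fun i => QCTL.qAG (QCTL.qiff (QCTL.atom (κ i)) (θ i)))
    Φ0
/-- A sequence of propositional quantifications applied to a formula
(`true` = existential, `false` = universal). -/
def prefixQ {AP : Type} (Q : List (Bool × AP)) (φ : QCTL AP) : QCTL AP :=
  Q.foldr (fun bp acc => if bp.1 then QCTL.qexi bp.2 acc else QCTL.qall bp.2 acc) φ
/-- Quantified Boolean formulas over variables in `W`. -/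
inductive QBF (W : Type) : Type where
  | tru : QBF W
  | fls : QBF W
  | var : W → QBF W
  | bneg : QBF W → QBF W
  | bor : QBF W → QBF W → QBF W
  | band : QBF W → QBF W → QBF W
  | bexi : W → QBF W → QBF W
  | ball : W → QBF W → QBF W

namespace QBF
variable {W : Type}

def bimp (α β : QBF W) : QBF W := bor (bneg α) β

/-- Semantics of QBF over a valuation of the (free) variables. -/
def bsat : QBF W → (W → Prop) → Prop
  | tru, _ => True
  | fls, _ => False
  | var w, v => v w
  | bneg α, v => ¬ α.bsat v
  | bor α β, v => α.bsat v ∨ β.bsat v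
  | band α β, v => α.bsat v ∧ β.bsat v
  | bexi w α, v => ∃ b : Prop, α.bsat (fun w' => if w' = w then b else v w')
  | ball w α, v => ∀ b : Prop, α.bsat (fun w' => if w' = w then b else v w')

/-- Validity of a (closed) QBF formula. -/
def valid (α : QBF W) : Prop := ∀ v : W → Prop, α.bsat v

/-- Size of a QBF formula. -/
def bsize : QBF W → ℕ
  | tru => 1
  | fls => 1
  | var _ => 1
  | bneg α => α.bsize + 1
  | bor α β => α.bsize + β.bsize + 1
  | band α β => α.bsize + β.bsize + 1
  | bexi _ α => α.bsize + 1
  | ball _ α => α.bsize + 1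

/-- Finite disjunction `⋁_{y ∈ l} f y`. -/
def bigOr {γ : Type} (l : List γ) (f : γ → QBF W) : QBF W := (l.map f).foldr bor fls

/-- Finite conjunction `⋀_{y ∈ l} f y`. -/
def bigAnd {γ : Type} (l : List γ) (f : γ → QBF W) : QBF W := (l.map f).foldr band tru

end QBF

/-- The list of `E`-successors of a state. -/
noncomputable def Kripke.succList {AP V : Type} [Fintype V] (K : Kripke AP V) (x : V) :
    List V :=
  (Finset.univ.filter fun y => K.E x y).toList

/-- The list of states reachable from `x` (along `E*`). -/
noncomputable def Kripke.reachList {AP V : Type} [Fintype V] (K : Kripke AP V) (x : V) :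
    List V :=
  (Finset.univ.filter fun y => Relation.ReflTransGen K.E x y).toList

/-- The set of quantified atomic propositions of a formula. -/
def QCTL.quantAtoms {AP : Type} : QCTL AP → Set AP
  | .atom _ => ∅
  | .qneg φ => φ.quantAtoms
  | .qor φ ψ => φ.quantAtoms ∪ ψ.quantAtoms
  | .qEX φ => φ.quantAtoms
  | .qEU φ ψ => φ.quantAtoms ∪ ψ.quantAtoms
  | .qAU φ ψ => φ.quantAtoms ∪ ψ.quantAtoms
  | .qexi p φ => insert p φ.quantAtoms

/-- The set of subformulas of a formula. -/
def QCTL.subforms {AP : Type} : QCTL AP → Set (QCTL AP)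
  | .atom p => {QCTL.atom p}
  | .qneg φ => insert (QCTL.qneg φ) φ.subforms
  | .qor φ ψ => insert (QCTL.qor φ ψ) (φ.subforms ∪ ψ.subforms)
  | .qEX φ => insert (QCTL.qEX φ) φ.subforms
  | .qEU φ ψ => insert (QCTL.qEU φ ψ) (φ.subforms ∪ ψ.subforms)
  | .qAU φ ψ => insert (QCTL.qAU φ ψ) (φ.subforms ∪ ψ.subforms)
  | .qexi p φ => insert (QCTL.qexi p φ) φ.subforms

/-- Semantics of QCTL within an environment `ε` (a partial map from quantified
propositions to sets of states): a proposition in the domain of `ε` is read from `ε`,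
any other proposition is read from the labelling of the structure, and the
propositional quantifier extends `ε`. -/
def QCTL.satE {AP V : Type} (K : Kripke AP V) :
    QCTL AP → (AP → Option (Set V)) → V → Prop
  | .atom p, ε, x => match ε p with
      | some S => x ∈ S
      | none => p ∈ K.label x
  | .qneg φ, ε, x => ¬ φ.satE K ε x
  | .qor φ ψ, ε, x => φ.satE K ε x ∨ ψ.satE K ε x
  | .qEX φ, ε, x => ∃ y, K.E x y ∧ φ.satE K ε y
  | .qEU φ ψ, ε, x => ∃ ρ : ℕ → V, ρ 0 = x ∧ (∀ i, K.E (ρ i) (ρ (i + 1))) ∧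
      ∃ i, ψ.satE K ε (ρ i) ∧ ∀ j < i, φ.satE K ε (ρ j)
  | .qAU φ ψ, ε, x => ∀ ρ : ℕ → V, ρ 0 = x → (∀ i, K.E (ρ i) (ρ (i + 1))) →
      ∃ i, ψ.satE K ε (ρ i) ∧ ∀ j < i, φ.satE K ε (ρ j)
  | .qexi p φ, ε, x =>
      ∃ S : Set V, φ.satE K (fun q => if q = p then some S else ε q) x

/-- The domain of an environment. -/
def envDom {AP V : Type} (ε : AP → Option (Set V)) : Set AP := {p | ε p ≠ none}

/-- The Boolean valuation `v_ε` associated with an environment `ε`: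
`v_ε(p^x) = ⊤` iff `x ∈ ε(p)`. -/
def envVal {AP V : Type} (ε : AP → Option (Set V)) : AP × V → Prop :=
  fun w => ∃ S, ε w.1 = some S ∧ w.2 ∈ S
/-- Formulas built from atomic propositions, Boolean operators, propositional
quantifiers and the modalities `EX` and `AG` (the target fragment of the fixed-point
transformation `FPC`). -/
inductive AGF (AP : Type) : Type where
  | atom : AP → AGF AP
  | aneg : AGF AP → AGF AP
  | aor  : AGF AP → AGF AP → AGF AP
  | aEX  : AGF AP → AGF AP
  | aAG  : AGF AP → AGF AP
  | aexi : AP → AGF AP → AGF AP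

namespace AGF
variable {AP : Type}
def aand (φ ψ : AGF AP) : AGF AP := aneg (aor (aneg φ) (aneg ψ))
def aimp (φ ψ : AGF AP) : AGF AP := aor (aneg φ) ψ
def aiff (φ ψ : AGF AP) : AGF AP := aand (aimp φ ψ) (aimp ψ φ)
def aAX (φ : AGF AP) : AGF AP := aneg (aEX (aneg φ))
def aall (p : AP) (φ : AGF AP) : AGF AP := aneg (aexi p (aneg φ))

/-- An upper bound on the atomic propositions occurring in a formula over `AP = ℕ`
(used to generate fresh propositions). -/
def maxAtom : AGF ℕ → ℕ
  | atom p => p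
  | aneg φ => φ.maxAtom
  | aor φ ψ => max φ.maxAtom ψ.maxAtom
  | aEX φ => φ.maxAtom
  | aAG φ => φ.maxAtom
  | aexi p φ => max p φ.maxAtom
end AGF

/-- The fixed-point transformation `FPC`: every `E φ U ψ` is replaced by
`∀z.( AG( z ↔ (ψ ∨ (φ ∧ EX z)) ) → z )` and every `A φ U ψ` by
`∀z.( AG( z ↔ (ψ ∨ (φ ∧ AX z)) ) → z )`, with `z` fresh each time. -/
def FPC : QCTL ℕ → AGF ℕ
  | .atom p => AGF.atom p
  | .qneg φ => AGF.aneg (FPC φ)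
  | .qor φ ψ => AGF.aor (FPC φ) (FPC ψ)
  | .qEX φ => AGF.aEX (FPC φ)
  | .qEU φ ψ =>
      let φ' := FPC φ
      let ψ' := FPC ψ
      let z := max φ'.maxAtom ψ'.maxAtom + 1
      AGF.aall z (AGF.aimp
        (AGF.aAG (AGF.aiff (AGF.atom z) (ψ'.aor (φ'.aand (AGF.aEX (AGF.atom z))))))
        (AGF.atom z))
  | .qAU φ ψ =>
      let φ' := FPC φ
      let ψ' := FPC ψ
      let z := max φ'.maxAtom ψ'.maxAtom + 1
      AGF.aall z (AGF.aimp
        (AGF.aAG (AGF.aiff (AGF.atom z) (ψ'.aor (φ'.aand (AGF.aAX (AGF.atom z))))))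
        (AGF.atom z))
  | .qexi p φ => AGF.aexi p (FPC φ)

/-- The translation of the `EX`/`AG` fragment into QBF: the basic rules together with
the rule `(AG φ)^{x,P} = ⋀_{(x,y)∈E*} φ̂^{y,P}`. -/
noncomputable def hatAG {V : Type} [Fintype V] (K : Kripke ℕ V) :
    AGF ℕ → V → Set ℕ → QBF (ℕ × V)
  | .atom p, x, P =>
      if p ∈ P then QBF.var (p, x)
      else if p ∈ K.label x then QBF.tru else QBF.fls
  | .aneg φ, x, P => QBF.bneg (hatAG K φ x P)
  | .aor φ ψ, x, P => QBF.bor (hatAG K φ x P) (hatAG K ψ x P)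
  | .aEX φ, x, P => QBF.bigOr (K.succList x) (fun y => hatAG K φ y P)
  | .aAG φ, x, P => QBF.bigAnd (K.reachList x) (fun y => hatAG K φ y P)
  | .aexi p φ, x, P =>
      (Finset.univ.toList (α := V)).foldr (fun v acc => QBF.bexi (p, v) acc)
        (hatAG K φ x (insert p P))
/-- The number of edges of a (finite) Kripke structure. -/
noncomputable def edgeCard {AP V : Type} [Fintype V] (K : Kripke AP V) : ℕ :=
  (Finset.univ.filter fun e : V × V => K.E e.1 e.2).card

/-- Flat formulas: `Q.( Φ₀ ∧ ⋀ᵢ AG(κᵢ ↔ θᵢ) )` with `Q` a sequence of propositional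
quantifications, `Φ₀` a Boolean combination of basic CTL formulas and every `θᵢ` a
basic CTL formula. -/
def IsFlat (Ψ : QCTL ℕ) : Prop :=
  ∃ (Q : List (Bool × ℕ)) (m : ℕ) (κ : Fin m → ℕ)
    (Φ0 : QCTL ℕ) (θ : Fin m → QCTL ℕ),
    BoolCombBasic Φ0 ∧ (∀ i, BasicCTL (θ i)) ∧
    Ψ = prefixQ Q (flatBody m κ Φ0 θ)


section Paths
variable {V : Type} {E : V → V → Prop}

theorem exists_path (hser : ∀ v, ∃ w, E v w) (y : V) :
    ∃ ρ : ℕ → V, ρ 0 = y ∧ ∀ i, E (ρ i) (ρ (i+1)) := by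
  choose f hf using hser
  exact ⟨fun n => Nat.rec y (fun _ v => f v) n, rfl, fun i => hf _⟩

/-- prepend a state to a path -/
def pcons (y : V) (ρ : ℕ → V) : ℕ → V := fun n => match n with | 0 => y | n+1 => ρ n

/-- path-based semantics of EU -/
def EUsem (E : V → V → Prop) (a b : V → Prop) (x : V) : Prop :=
  ∃ ρ : ℕ → V, ρ 0 = x ∧ (∀ i, E (ρ i) (ρ (i + 1))) ∧
      ∃ i, b (ρ i) ∧ ∀ j < i, a (ρ j)

/-- path-based semantics of AU -/
def AUsem (E : V → V → Prop) (a b : V → Prop) (x : V) : Prop :=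
  ∀ ρ : ℕ → V, ρ 0 = x → (∀ i, E (ρ i) (ρ (i + 1))) →
      ∃ i, b (ρ i) ∧ ∀ j < i, a (ρ j)

theorem EUsem_unfold (hser : ∀ v, ∃ w, E v w) (a b : V → Prop) (x : V) :
    EUsem E a b x ↔ b x ∨ (a x ∧ ∃ u, E x u ∧ EUsem E a b u) := by
  constructor
  · rintro ⟨ρ, h0, hE, i, hb, ha⟩
    rcases i with _ | k
    · left; rwa [h0] at hb
    · right
      refine ⟨by have := ha 0 (Nat.succ_pos k); rwa [h0] at this, ρ 1, by rw [← h0]; exact hE 0,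
        fun n => ρ (n+1), rfl, fun n => hE (n+1), k, hb, fun j hj => ha (j+1) (by omega)⟩
  · rintro (hb | ⟨hax, u, hxu, ρ, h0, hE, i, hb, ha⟩)
    · obtain ⟨ρ, h0, hE⟩ := exists_path hser x
      exact ⟨ρ, h0, hE, 0, by rwa [h0], fun j hj => absurd hj (Nat.not_lt_zero j)⟩
    · refine ⟨pcons x ρ, rfl, ?_, i+1, hb, ?_⟩
      · intro n; rcases n with _ | n
        · show E x (ρ 0); rwa [h0]
        · exact hE n
      · intro j hj; rcases j with _ | j
        · exact hax
        · exact ha j (by omega)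

theorem AUsem_unfold (hser : ∀ v, ∃ w, E v w) (a b : V → Prop) (x : V) :
    AUsem E a b x ↔ b x ∨ (a x ∧ ∀ u, E x u → AUsem E a b u) := by
  constructor
  · intro h
    by_cases hbx : b x
    · exact Or.inl hbx
    · right
      obtain ⟨ρ, h0, hE⟩ := exists_path hser x
      obtain ⟨i, hb, ha⟩ := h ρ h0 hE
      have hipos : i ≠ 0 := by rintro rfl; rw [h0] at hb; exact hbx hb
      refine ⟨by have := ha 0 (Nat.pos_of_ne_zero hipos); rwa [h0] at this, ?_⟩
      intro u hxu σ hσ0 hσE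
      have h0' : pcons x σ 0 = x := rfl
      have hEp : ∀ n, E (pcons x σ n) (pcons x σ (n+1)) := by
        intro n; rcases n with _ | n
        · show E x (σ 0); rwa [hσ0]
        · exact hσE n
      obtain ⟨i, hb, ha⟩ := h (pcons x σ) h0' hEp
      rcases i with _ | k
      · exact absurd hb hbx
      · exact ⟨k, hb, fun j hj => ha (j+1) (by omega)⟩
  · rintro (hbx | ⟨hax, hsucc⟩) ρ h0 hE
    · exact ⟨0, by rwa [h0], fun j hj => absurd hj (Nat.not_lt_zero j)⟩
    · obtain ⟨i, hb, ha⟩ := hsucc (ρ 1) (by rw [← h0]; exact hE 0) (fun n => ρ (n+1)) rfl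
        (fun n => hE (n+1))
      refine ⟨i+1, hb, ?_⟩
      intro j hj; rcases j with _ | j
      · rwa [h0]
      · exact ha j (by omega)

theorem reach_along (ρ : ℕ → V) (hE : ∀ i, E (ρ i) (ρ (i+1))) (k : ℕ) :
    Relation.ReflTransGen E (ρ 0) (ρ k) := by
  induction k with
  | zero => exact Relation.ReflTransGen.refl
  | succ n ih => exact ih.tail (hE n)

theorem finChain {r : V → V → Prop} {x y : V} (h : Relation.ReflTransGen r x y) :
    ∃ n, ∃ f : ℕ → V, f 0 = x ∧ f n = y ∧ ∀ i < n, r (f i) (f (i+1)) := by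
  induction h with
  | refl => exact ⟨0, fun _ => x, rfl, rfl, fun i hi => absurd hi (Nat.not_lt_zero i)⟩
  | @tail b c hab hbc ih =>
    obtain ⟨n, f, h0, hn, hr⟩ := ih
    refine ⟨n+1, fun i => if i ≤ n then f i else c, by simp [h0], by simp, ?_⟩
    intro i hi
    by_cases hin : i < n
    · simp only [if_pos (by omega : i ≤ n), if_pos (by omega : i + 1 ≤ n)]
      exact hr i hin
    · have hin' : i = n := by omega
      simp only [hin', if_pos le_rfl, if_neg (by omega : ¬ n + 1 ≤ n), hn]
      exact hbc

theorem coreEU (hser : ∀ v, ∃ w, E v w) (a b : V → Prop) (x : V) :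
    (∀ S : Set V, (∀ y, Relation.ReflTransGen E x y →
        (y ∈ S ↔ (b y ∨ (a y ∧ ∃ u, E y u ∧ u ∈ S)))) → x ∈ S) ↔ EUsem E a b x := by
  constructor
  · intro h
    exact h {y | EUsem E a b y} (fun y _ => EUsem_unfold hser a b y)
  · rintro ⟨ρ, h0, hE, i, hb, ha⟩ S hS
    have hreach : ∀ k, Relation.ReflTransGen E x (ρ k) := by
      intro k; rw [← h0]; exact reach_along ρ hE k
    have key : ∀ j, j ≤ i → ρ (i - j) ∈ S := by
      intro j
      induction j with
      | zero => intro _; exact (hS (ρ i) (hreach i)).mpr (Or.inl hb)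
      | succ m ih =>
        intro hmi
        refine (hS _ (hreach _)).mpr (Or.inr ⟨ha _ (by omega), ρ (i - m), ?_, ih (by omega)⟩)
        have heq : i - (m+1) + 1 = i - m := by omega
        have := hE (i - (m+1))
        rwa [heq] at this
    have := key i le_rfl
    simpa [h0] using this

theorem coreAU (hser : ∀ v, ∃ w, E v w) (a b : V → Prop) (x : V) :
    (∀ S : Set V, (∀ y, Relation.ReflTransGen E x y →
        (y ∈ S ↔ (b y ∨ (a y ∧ ∀ u, E y u → u ∈ S)))) → x ∈ S) ↔ AUsem E a b x := by
  constructor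
  · intro h
    exact h {y | AUsem E a b y} (fun y _ => AUsem_unfold hser a b y)
  · intro h S hS
    by_contra hxS
    set r : V → V → Prop := fun u v => E u v ∧ v ∉ S with hr
    have hmono : ∀ {y}, Relation.ReflTransGen r x y → Relation.ReflTransGen E x y := by
      intro y hy; exact Relation.ReflTransGen.mono (p := E) (fun u v (huv : r u v) => huv.1) x y hy
    have hout : ∀ {y}, Relation.ReflTransGen r x y → y ∉ S := by
      intro y hy
      induction hy with
      | refl => exact hxS
      | tail _ hbc _ => exact hbc.2
    have hstep : ∀ y, Relation.ReflTransGen r x y →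
        ¬ b y ∧ (¬ a y ∨ ∃ u, E y u ∧ u ∉ S) := by
      intro y hy
      have h1 := (hS y (hmono hy))
      have h2 : y ∉ S := hout hy
      by_contra hcon
      push_neg at hcon
      rcases Classical.em (b y) with hb | hb
      · exact h2 (h1.mpr (Or.inl hb))
      · obtain ⟨ha', hu⟩ := hcon hb
        exact h2 (h1.mpr (Or.inr ⟨ha', fun u hEu => hu u hEu⟩))
    by_cases hcase : ∃ y, Relation.ReflTransGen r x y ∧ ¬ a y
    · -- finite chain to a state where a fails, then extend arbitrarily
      obtain ⟨y, hy, hay⟩ := hcase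
      obtain ⟨n, f, hf0, hfn, hfr⟩ := finChain hy
      obtain ⟨σ, hσ0, hσE⟩ := exists_path hser y
      set ρ : ℕ → V := fun k => if k ≤ n then f k else σ (k - n) with hρ
      have hρn : ρ n = y := by simp [hρ, hfn]
      have hρE : ∀ i, E (ρ i) (ρ (i+1)) := by
        intro i
        rcases lt_trichotomy i n with hin | hin | hin
        · simp only [hρ, if_pos (by omega : i ≤ n), if_pos (by omega : i + 1 ≤ n)]
          exact (hfr i hin).1
        · subst hin
          simp only [hρ, if_pos le_rfl, if_neg (by omega : ¬ i + 1 ≤ i), hfn,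
            (by omega : i + 1 - i = 1)]
          rw [← hσ0]; exact hσE 0
        · simp only [hρ, if_neg (by omega : ¬ i ≤ n), if_neg (by omega : ¬ i + 1 ≤ n)]
          have : i + 1 - n = (i - n) + 1 := by omega
          rw [this]; exact hσE (i - n)
      have hρ0 : ρ 0 = x := by simp [hρ, hf0]
      obtain ⟨i, hb, ha⟩ := h ρ hρ0 hρE
      have hchain : ∀ k, k ≤ n → Relation.ReflTransGen r x (f k) := by
        intro k
        induction k with
        | zero => intro _; rw [hf0]
        | succ m ih => intro hk; exact (ih (by omega)).tail (hfr m (by omega))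
      rcases le_or_gt i n with hin | hin
      · have : ρ i = f i := by simp [hρ, if_pos hin]
        rw [this] at hb
        exact (hstep (f i) (hchain i hin)).1 hb
      · have := ha n hin
        rw [hρn] at this
        exact hay this
    · -- a holds everywhere reachable outside S: build an infinite path avoiding S
      push_neg at hcase
      have hnext : ∀ y : {y : V // Relation.ReflTransGen r x y},
          ∃ u : {y : V // Relation.ReflTransGen r x y}, E y.1 u.1 := by
        rintro ⟨y, hy⟩
        obtain ⟨-, hu⟩ := hstep y hy
        rcases hu with hna | ⟨u, hEu, hus⟩
        · exact absurd (hcase y hy) hna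
        · exact ⟨⟨u, hy.tail ⟨hEu, hus⟩⟩, hEu⟩
      choose g hg using hnext
      set σ : ℕ → {y : V // Relation.ReflTransGen r x y} :=
        fun n => Nat.rec ⟨x, Relation.ReflTransGen.refl⟩ (fun _ v => g v) n with hσ
      obtain ⟨i, hb, -⟩ := h (fun n => (σ n).1) rfl (fun n => hg (σ n))
      exact (hstep _ (σ i).2).1 hb

section Part2

/-- Semantics of the `EX`/`AG` fragment within an environment. -/
def AGF.satE {AP V : Type} (K : Kripke AP V) :
    AGF AP → (AP → Option (Set V)) → V → Prop
  | .atom p, ε, x => match ε p with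
      | some S => x ∈ S
      | none => p ∈ K.label x
  | .aneg φ, ε, x => ¬ AGF.satE K φ ε x
  | .aor φ ψ, ε, x => AGF.satE K φ ε x ∨ AGF.satE K ψ ε x
  | .aEX φ, ε, x => ∃ y, K.E x y ∧ AGF.satE K φ ε y
  | .aAG φ, ε, x => ∀ y, Relation.ReflTransGen K.E x y → AGF.satE K φ ε y
  | .aexi p φ, ε, x => ∃ S : Set V, AGF.satE K φ (fun q => if q = p then some S else ε q) x

/-- The environment read off from a QBF valuation and a set of "live" propositions. -/
noncomputable def envOf {AP V : Type} (P : Set AP) (v : AP × V → Prop) : AP → Option (Set V) :=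
  fun p => if p ∈ P then some {y | v (p, y)} else none

theorem bigOr_cons {W γ : Type} (f : γ → QBF W) (a : γ) (l : List γ) :
    QBF.bigOr (a :: l) f = QBF.bor (f a) (QBF.bigOr l f) := rfl

theorem bigAnd_cons {W γ : Type} (f : γ → QBF W) (a : γ) (l : List γ) :
    QBF.bigAnd (a :: l) f = QBF.band (f a) (QBF.bigAnd l f) := rfl

theorem bigOr_bsat {W γ : Type} (l : List γ) (f : γ → QBF W) (v : W → Prop) :
    (QBF.bigOr l f).bsat v ↔ ∃ y ∈ l, (f y).bsat v := by
  induction l with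
  | nil => simp [QBF.bigOr, QBF.bsat]
  | cons a l ih => rw [bigOr_cons]; simp [QBF.bsat, ih]

theorem bigAnd_bsat {W γ : Type} (l : List γ) (f : γ → QBF W) (v : W → Prop) :
    (QBF.bigAnd l f).bsat v ↔ ∀ y ∈ l, (f y).bsat v := by
  induction l with
  | nil => simp [QBF.bigAnd, QBF.bsat]
  | cons a l ih => rw [bigAnd_cons]; simp [QBF.bsat, ih]

theorem mem_succList {V : Type} [Fintype V] (K : Kripke ℕ V) (x y : V) :
    y ∈ K.succList x ↔ K.E x y := by
  simp [Kripke.succList]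

theorem mem_reachList {V : Type} [Fintype V] (K : Kripke ℕ V) (x y : V) :
    y ∈ K.reachList x ↔ Relation.ReflTransGen K.E x y := by
  simp [Kripke.reachList]

theorem bsat_congr {W : Type} (T : QBF W) {v v' : W → Prop} (h : ∀ w, v w = v' w) :
    T.bsat v ↔ T.bsat v' := by
  rw [show v = v' from funext h]

theorem satE_env_congr {AP V : Type} (K : Kripke AP V) (φ : AGF AP) (x : V)
    {ε ε' : AP → Option (Set V)} (h : ∀ q, ε q = ε' q) :
    AGF.satE K φ ε x ↔ AGF.satE K φ ε' x := by
  rw [show ε = ε' from funext h]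

theorem foldr_bexi_bsat {V : Type} (p : ℕ) (T : QBF (ℕ × V)) (l : List V)
    (v : ℕ × V → Prop) :
    (l.foldr (fun y acc => QBF.bexi (p, y) acc) T).bsat v ↔
      ∃ f : V → Prop, T.bsat (fun w => if w.1 = p ∧ w.2 ∈ l then f w.2 else v w) := by
  induction l generalizing v with
  | nil =>
    have : (fun w : ℕ × V => if w.1 = p ∧ w.2 ∈ ([] : List V) then (fun _ => True) w.2 else v w)
        = v := by funext w; simp
    constructor
    · intro h
      refine ⟨fun _ => True, ?_⟩
      have he : (fun w : ℕ × V => if w.1 = p ∧ w.2 ∈ ([] : List V) then True else v w) = v := by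
        funext w; simp
      simpa [he] using h
    · rintro ⟨f, hf⟩
      have he : (fun w : ℕ × V => if w.1 = p ∧ w.2 ∈ ([] : List V) then f w.2 else v w) = v := by
        funext w; simp
      simpa [he] using hf
  | cons a l ih =>
    show (∃ b : Prop, _) ↔ _
    constructor
    · rintro ⟨b, hb⟩
      rw [ih] at hb
      obtain ⟨f, hf⟩ := hb
      refine ⟨fun y => if y ∈ l then f y else b, (bsat_congr T fun w => ?_).mpr hf⟩
      obtain ⟨q, y⟩ := w
      by_cases h1 : q = p <;> by_cases h2 : y ∈ l <;> by_cases h3 : y = a <;>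
        simp_all [Prod.ext_iff]
    · rintro ⟨f, hf⟩
      refine ⟨f a, ?_⟩
      rw [ih]
      refine ⟨f, (bsat_congr T fun w => ?_).mpr hf⟩
      obtain ⟨q, y⟩ := w
      by_cases h1 : q = p <;> by_cases h2 : y ∈ l <;> by_cases h3 : y = a <;>
        simp_all [Prod.ext_iff]

theorem hat_correct {V : Type} [Fintype V] (K : Kripke ℕ V) (ξ : AGF ℕ) :
    ∀ (x : V) (P : Set ℕ) (v : ℕ × V → Prop),
      (hatAG K ξ x P).bsat v ↔ AGF.satE K ξ (envOf P v) x := by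
  induction ξ with
  | atom p =>
    intro x P v
    by_cases hP : p ∈ P
    · simp [hatAG, hP, QBF.bsat, AGF.satE, envOf]
    · by_cases hl : p ∈ K.label x <;> simp [hatAG, hP, hl, QBF.bsat, AGF.satE, envOf]
  | aneg φ ih => intro x P v; simp [hatAG, QBF.bsat, AGF.satE, ih]
  | aor φ ψ ih1 ih2 => intro x P v; simp [hatAG, QBF.bsat, AGF.satE, ih1, ih2]
  | aEX φ ih =>
    intro x P v
    show (QBF.bigOr _ _).bsat v ↔ _
    rw [bigOr_bsat]
    show _ ↔ ∃ y, K.E x y ∧ AGF.satE K φ (envOf P v) y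
    constructor
    · rintro ⟨y, hy, hb⟩
      exact ⟨y, (mem_succList K x y).mp hy, (ih y P v).mp hb⟩
    · rintro ⟨y, hy, hs⟩
      exact ⟨y, (mem_succList K x y).mpr hy, (ih y P v).mpr hs⟩
  | aAG φ ih =>
    intro x P v
    show (QBF.bigAnd _ _).bsat v ↔ _
    rw [bigAnd_bsat]
    show _ ↔ ∀ y, Relation.ReflTransGen K.E x y → AGF.satE K φ (envOf P v) y
    constructor
    · intro h y hy
      exact (ih y P v).mp (h y ((mem_reachList K x y).mpr hy))
    · intro h y hy
      exact (ih y P v).mpr (h y ((mem_reachList K x y).mp hy))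
  | aexi p φ ih =>
    intro x P v
    simp only [hatAG]
    rw [foldr_bexi_bsat]
    simp only [AGF.satE]
    constructor
    · rintro ⟨f, hf⟩
      rw [ih] at hf
      refine ⟨{y | f y}, ?_⟩
      refine (satE_env_congr K φ x fun q => ?_).mpr hf
      by_cases hq : q = p <;> by_cases hqP : q ∈ P <;>
        simp [envOf, hq, hqP, Set.mem_insert_iff]
    · rintro ⟨S, hS⟩
      refine ⟨fun y => y ∈ S, ?_⟩
      rw [ih]
      refine (satE_env_congr K φ x fun q => ?_).mpr hS
      by_cases hq : q = p <;> by_cases hqP : q ∈ P <;>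
        simp [envOf, hq, hqP, Set.mem_insert_iff]

theorem hat_valid_iff {V : Type} [Fintype V] (K : Kripke ℕ V) (ξ : AGF ℕ) (x : V) :
    (hatAG K ξ x ∅).valid ↔ AGF.satE K ξ (fun _ => none) x := by
  have henv : ∀ v : ℕ × V → Prop, envOf (∅ : Set ℕ) v = fun _ => none := by
    intro v; funext q; simp [envOf]
  constructor
  · intro h
    have := (hat_correct K ξ x ∅ (fun _ => True)).mp (h _)
    rwa [henv] at this
  · intro h v
    rw [hat_correct, henv]
    exact h

end Part2


section Part3

variable {V : Type}

theorem satE_aand {AP : Type} (K : Kripke AP V) (a b : AGF AP) (ε : AP → Option (Set V)) (x : V) :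
    AGF.satE K (a.aand b) ε x ↔ (AGF.satE K a ε x ∧ AGF.satE K b ε x) := by
  simp [AGF.aand, AGF.satE, not_or]

theorem satE_aimp {AP : Type} (K : Kripke AP V) (a b : AGF AP) (ε : AP → Option (Set V)) (x : V) :
    AGF.satE K (a.aimp b) ε x ↔ (AGF.satE K a ε x → AGF.satE K b ε x) := by
  simp [AGF.aimp, AGF.satE, imp_iff_not_or]

theorem satE_aiff {AP : Type} (K : Kripke AP V) (a b : AGF AP) (ε : AP → Option (Set V)) (x : V) :
    AGF.satE K (a.aiff b) ε x ↔ (AGF.satE K a ε x ↔ AGF.satE K b ε x) := by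
  rw [AGF.aiff, satE_aand, satE_aimp, satE_aimp]; tauto

theorem satE_aAX {AP : Type} (K : Kripke AP V) (a : AGF AP) (ε : AP → Option (Set V)) (x : V) :
    AGF.satE K a.aAX ε x ↔ ∀ y, K.E x y → AGF.satE K a ε y := by
  simp [AGF.aAX, AGF.satE]

theorem satE_aall {AP : Type} (K : Kripke AP V) (p : AP) (a : AGF AP)
    (ε : AP → Option (Set V)) (x : V) :
    AGF.satE K (AGF.aall p a) ε x ↔
      ∀ S : Set V, AGF.satE K a (fun q => if q = p then some S else ε q) x := by
  simp [AGF.aall, AGF.satE, not_exists, not_not]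

theorem satE_atomz {AP : Type} (K : Kripke AP V) (z : AP) (S : Set V)
    (ε : AP → Option (Set V)) (y : V) :
    AGF.satE K (AGF.atom z) (fun q => if q = z then some S else ε q) y ↔ y ∈ S := by
  simp [AGF.satE]

theorem satE_fpEU {AP : Type} (K : Kripke AP V) (z : AP) (φ' ψ' : AGF AP)
    (ε : AP → Option (Set V)) (x : V) :
    AGF.satE K (AGF.aall z (AGF.aimp
        (AGF.aAG (AGF.aiff (AGF.atom z) (ψ'.aor (φ'.aand (AGF.aEX (AGF.atom z))))))
        (AGF.atom z))) ε x ↔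
      ∀ S : Set V, (∀ y, Relation.ReflTransGen K.E x y →
          (y ∈ S ↔ (AGF.satE K ψ' (fun q => if q = z then some S else ε q) y ∨
            (AGF.satE K φ' (fun q => if q = z then some S else ε q) y ∧
              ∃ u, K.E y u ∧ u ∈ S)))) → x ∈ S := by
  rw [satE_aall]
  refine forall_congr' fun S => ?_
  rw [satE_aimp]
  refine imp_congr ?_ (satE_atomz K z S ε x)
  show (∀ y, _ → _) ↔ _
  refine forall_congr' fun y => forall_congr' fun _ => ?_
  rw [satE_aiff]
  refine iff_congr (satE_atomz K z S ε y) (or_congr Iff.rfl ?_)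
  rw [satE_aand]
  refine and_congr Iff.rfl ?_
  show (∃ u, _ ∧ _) ↔ _
  exact exists_congr fun u => and_congr Iff.rfl (satE_atomz K z S ε u)

theorem satE_fpAU {AP : Type} (K : Kripke AP V) (z : AP) (φ' ψ' : AGF AP)
    (ε : AP → Option (Set V)) (x : V) :
    AGF.satE K (AGF.aall z (AGF.aimp
        (AGF.aAG (AGF.aiff (AGF.atom z) (ψ'.aor (φ'.aand (AGF.aAX (AGF.atom z))))))
        (AGF.atom z))) ε x ↔
      ∀ S : Set V, (∀ y, Relation.ReflTransGen K.E x y →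
          (y ∈ S ↔ (AGF.satE K ψ' (fun q => if q = z then some S else ε q) y ∨
            (AGF.satE K φ' (fun q => if q = z then some S else ε q) y ∧
              ∀ u, K.E y u → u ∈ S)))) → x ∈ S := by
  rw [satE_aall]
  refine forall_congr' fun S => ?_
  rw [satE_aimp]
  refine imp_congr ?_ (satE_atomz K z S ε x)
  show (∀ y, _ → _) ↔ _
  refine forall_congr' fun y => forall_congr' fun _ => ?_
  rw [satE_aiff]
  refine iff_congr (satE_atomz K z S ε y) (or_congr Iff.rfl ?_)
  rw [satE_aand]
  refine and_congr Iff.rfl ?_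
  rw [satE_aAX]
  exact forall_congr' fun u => imp_congr Iff.rfl (satE_atomz K z S ε u)

theorem maxAtom_bound (φ : QCTL ℕ) : ∀ q ∈ φ.atoms, q ≤ (FPC φ).maxAtom := by
  induction φ with
  | atom p => intro q hq; simp only [QCTL.atoms, Set.mem_singleton_iff] at hq
              simp [hq, FPC, AGF.maxAtom]
  | qneg φ ih => intro q hq; exact ih q hq
  | qor φ ψ ih1 ih2 =>
    intro q hq
    simp only [QCTL.atoms, Set.mem_union] at hq
    simp only [FPC, AGF.maxAtom]
    rcases hq with h | h
    · exact le_max_of_le_left (ih1 q h)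
    · exact le_max_of_le_right (ih2 q h)
  | qEX φ ih => intro q hq; exact ih q hq
  | qEU φ ψ ih1 ih2 =>
    intro q hq
    simp only [QCTL.atoms, Set.mem_union] at hq
    simp only [FPC, AGF.maxAtom, AGF.aall, AGF.aimp, AGF.aiff, AGF.aand, AGF.aAX]
    rcases hq with h | h
    · have := ih1 q h; omega
    · have := ih2 q h; omega
  | qAU φ ψ ih1 ih2 =>
    intro q hq
    simp only [QCTL.atoms, Set.mem_union] at hq
    simp only [FPC, AGF.maxAtom, AGF.aall, AGF.aimp, AGF.aiff, AGF.aand, AGF.aAX]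
    rcases hq with h | h
    · have := ih1 q h; omega
    · have := ih2 q h; omega
  | qexi p φ ih =>
    intro q hq
    simp only [QCTL.atoms, Set.mem_insert_iff] at hq
    simp only [FPC, AGF.maxAtom]
    rcases hq with h | h
    · omega
    · exact le_max_of_le_right (ih q h)

theorem satE_atoms_congr {AP : Type} (K : Kripke AP V) (φ : QCTL AP) :
    ∀ {ε ε' : AP → Option (Set V)}, (∀ q ∈ φ.atoms, ε q = ε' q) →
      ∀ x, QCTL.satE K φ ε x ↔ QCTL.satE K φ ε' x := by
  induction φ with
  | atom p =>
    intro ε ε' h x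
    simp only [QCTL.satE]
    rw [h p (by simp [QCTL.atoms])]
  | qneg φ ih =>
    intro ε ε' h x
    simp only [QCTL.satE]
    rw [ih h x]
  | qor φ ψ ih1 ih2 =>
    intro ε ε' h x
    simp only [QCTL.satE]
    rw [ih1 (fun q hq => h q (Set.mem_union_left _ hq)) x,
        ih2 (fun q hq => h q (Set.mem_union_right _ hq)) x]
  | qEX φ ih =>
    intro ε ε' h x
    simp only [QCTL.satE]
    exact exists_congr fun y => and_congr_right fun _ => ih h y
  | qEU φ ψ ih1 ih2 =>
    intro ε ε' h x
    have h1 := fun q hq => h q (Set.mem_union_left _ hq)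
    have h2 := fun q hq => h q (Set.mem_union_right _ hq)
    simp only [QCTL.satE]
    exact exists_congr fun ρ => and_congr_right fun _ => and_congr_right fun _ =>
      exists_congr fun i => and_congr (ih2 h2 _) (forall_congr' fun j =>
        forall_congr' fun _ => ih1 h1 _)
  | qAU φ ψ ih1 ih2 =>
    intro ε ε' h x
    have h1 := fun q hq => h q (Set.mem_union_left _ hq)
    have h2 := fun q hq => h q (Set.mem_union_right _ hq)
    simp only [QCTL.satE]
    exact forall_congr' fun ρ => forall_congr' fun _ => forall_congr' fun _ =>
      exists_congr fun i => and_congr (ih2 h2 _) (forall_congr' fun j =>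
        forall_congr' fun _ => ih1 h1 _)
  | qexi p φ ih =>
    intro ε ε' h x
    simp only [QCTL.satE]
    refine exists_congr fun S => ih (fun q hq => ?_) x
    by_cases hqp : q = p
    · simp [hqp]
    · simp only [if_neg hqp]
      exact h q (Set.mem_insert_iff.mpr (Or.inr hq))

theorem FPC_correct (K : Kripke ℕ V) (φ : QCTL ℕ) :
    ∀ (ε : ℕ → Option (Set V)) (x : V),
      AGF.satE K (FPC φ) ε x ↔ QCTL.satE K φ ε x := by
  induction φ with
  | atom p => intro ε x; simp [FPC, AGF.satE, QCTL.satE]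
  | qneg φ ih => intro ε x; simp only [FPC, AGF.satE, QCTL.satE]; rw [ih]
  | qor φ ψ ih1 ih2 => intro ε x; simp only [FPC, AGF.satE, QCTL.satE]; rw [ih1, ih2]
  | qEX φ ih =>
    intro ε x
    simp only [FPC, AGF.satE, QCTL.satE]
    exact exists_congr fun y => and_congr Iff.rfl (ih ε y)
  | qEU φ ψ ih1 ih2 =>
    intro ε x
    simp only [FPC]
    set z := max (FPC φ).maxAtom (FPC ψ).maxAtom + 1 with hz
    have hend : EUsem K.E (fun y => QCTL.satE K φ ε y) (fun y => QCTL.satE K ψ ε y) x ↔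
        QCTL.satE K (QCTL.qEU φ ψ) ε x := Iff.rfl
    refine ((satE_fpEU K z (FPC φ) (FPC ψ) ε x).trans
      (Iff.trans (forall_congr' fun S => imp_congr (forall_congr' fun y =>
        imp_congr Iff.rfl (iff_congr Iff.rfl (or_congr ?_ (and_congr ?_ Iff.rfl)))) Iff.rfl)
        (coreEU K.serial (fun y => QCTL.satE K φ ε y) (fun y => QCTL.satE K ψ ε y) x))).trans
      hend
    · rw [ih2]
      exact satE_atoms_congr K ψ (fun q hq => by
        have := maxAtom_bound ψ q hq; rw [if_neg (show ¬ q = z by omega)]) y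
    · rw [ih1]
      exact satE_atoms_congr K φ (fun q hq => by
        have := maxAtom_bound φ q hq; rw [if_neg (show ¬ q = z by omega)]) y
  | qAU φ ψ ih1 ih2 =>
    intro ε x
    simp only [FPC]
    set z := max (FPC φ).maxAtom (FPC ψ).maxAtom + 1 with hz
    have hend : AUsem K.E (fun y => QCTL.satE K φ ε y) (fun y => QCTL.satE K ψ ε y) x ↔
        QCTL.satE K (QCTL.qAU φ ψ) ε x := Iff.rfl
    refine ((satE_fpAU K z (FPC φ) (FPC ψ) ε x).trans
      (Iff.trans (forall_congr' fun S => imp_congr (forall_congr' fun y =>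
        imp_congr Iff.rfl (iff_congr Iff.rfl (or_congr ?_ (and_congr ?_ Iff.rfl)))) Iff.rfl)
        (coreAU K.serial (fun y => QCTL.satE K φ ε y) (fun y => QCTL.satE K ψ ε y) x))).trans
      hend
    · rw [ih2]
      exact satE_atoms_congr K ψ (fun q hq => by
        have := maxAtom_bound ψ q hq; rw [if_neg (show ¬ q = z by omega)]) y
    · rw [ih1]
      exact satE_atoms_congr K φ (fun q hq => by
        have := maxAtom_bound φ q hq; rw [if_neg (show ¬ q = z by omega)]) y
  | qexi p φ ih =>
    intro ε x
    simp only [FPC, AGF.satE, QCTL.satE]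
    exact exists_congr fun S => ih _ x

end Part3


section Part4

variable {AP V : Type}

/-- The structure obtained by overriding the labelling according to an environment. -/
noncomputable def Kripke.withEnv (K : Kripke AP V) (ε : AP → Option (Set V)) : Kripke AP V where
  E := K.E
  serial := K.serial
  label := fun v => {p | match ε p with | some S => v ∈ S | none => p ∈ K.label v}

theorem Kripke.ext' {K K' : Kripke AP V} (hE : K.E = K'.E) (hl : K.label = K'.label) :
    K = K' := by
  cases K; cases K'; simp_all

theorem withEnv_none (K : Kripke AP V) : K.withEnv (fun _ => none) = K := by
  apply Kripke.ext' rfl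
  funext v
  ext q
  simp [Kripke.withEnv]

theorem mem_withEnv_label (K : Kripke AP V) (ε : AP → Option (Set V)) (v : V) (q : AP) :
    q ∈ (K.withEnv ε).label v ↔
      (match ε q with | some S => v ∈ S | none => q ∈ K.label v) := Iff.rfl

theorem satE_eq_sat (K : Kripke AP V) (φ : QCTL AP) :
    ∀ (ε : AP → Option (Set V)) (x : V),
      QCTL.satE K φ ε x ↔ φ.sat (K.withEnv ε) x := by
  induction φ with
  | atom p => intro ε x; exact Iff.rfl
  | qneg φ ih => intro ε x; simp only [QCTL.satE, QCTL.sat]; rw [ih]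
  | qor φ ψ ih1 ih2 => intro ε x; simp only [QCTL.satE, QCTL.sat]; rw [ih1, ih2]
  | qEX φ ih =>
    intro ε x
    simp only [QCTL.satE, QCTL.sat]
    exact exists_congr fun y => and_congr Iff.rfl (ih ε y)
  | qEU φ ψ ih1 ih2 =>
    intro ε x
    simp only [QCTL.satE, QCTL.sat]
    exact exists_congr fun ρ => and_congr Iff.rfl (and_congr Iff.rfl (exists_congr fun i =>
      and_congr (ih2 ε _) (forall_congr' fun j => forall_congr' fun _ => ih1 ε _)))
  | qAU φ ψ ih1 ih2 =>
    intro ε x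
    simp only [QCTL.satE, QCTL.sat]
    exact forall_congr' fun ρ => forall_congr' fun _ => forall_congr' fun _ =>
      exists_congr fun i => and_congr (ih2 ε _) (forall_congr' fun j =>
        forall_congr' fun _ => ih1 ε _)
  | qexi p φ ih =>
    intro ε x
    simp only [QCTL.satE, QCTL.sat]
    constructor
    · rintro ⟨S, hS⟩
      refine ⟨K.withEnv (fun q => if q = p then some S else ε q), ⟨rfl, ?_⟩, (ih _ x).mp hS⟩
      intro v q hq
      rw [mem_withEnv_label, mem_withEnv_label, if_neg hq]
    · rintro ⟨K', ⟨hE, hlab⟩, hsat⟩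
      refine ⟨{v | p ∈ K'.label v}, ?_⟩
      rw [ih]
      have hK : K.withEnv (fun q => if q = p then some {v | p ∈ K'.label v} else ε q) = K' := by
        apply Kripke.ext'
        · exact hE.symm
        · funext v
          ext q
          by_cases hq : q = p
          · subst hq
            show (match (if q = q then some {v | q ∈ K'.label v} else ε q) with
              | some S => v ∈ S | none => q ∈ K.label v) ↔ q ∈ K'.label v
            rw [if_pos rfl]
            exact Iff.rfl
          · have h2 := hlab v q hq
            show (match (if q = p then some {v | p ∈ K'.label v} else ε q) with
              | some S => v ∈ S | none => q ∈ K.label v) ↔ q ∈ K'.label v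
            rw [if_neg hq]
            exact h2.symm
      rw [hK]
      exact hsat

/-- Full correctness of the translation. -/
theorem main_correct {V : Type} [Fintype V] (K : Kripke ℕ V) (Ψ : QCTL ℕ) (x : V) :
    (hatAG K (FPC Ψ) x ∅).valid ↔ Ψ.sat K x := by
  rw [hat_valid_iff, FPC_correct, satE_eq_sat, withEnv_none]

end Part4


section Part5

theorem bigOr_bsize {W γ : Type} (l : List γ) (f : γ → QBF W) :
    (QBF.bigOr l f).bsize = (l.map fun y => (f y).bsize).sum + l.length + 1 := by
  induction l with
  | nil => simp [QBF.bigOr, QBF.bsize]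
  | cons a l ih => rw [bigOr_cons]; simp only [QBF.bsize, ih, List.map_cons, List.sum_cons,
      List.length_cons]; omega

theorem bigAnd_bsize {W γ : Type} (l : List γ) (f : γ → QBF W) :
    (QBF.bigAnd l f).bsize = (l.map fun y => (f y).bsize).sum + l.length + 1 := by
  induction l with
  | nil => simp [QBF.bigAnd, QBF.bsize]
  | cons a l ih => rw [bigAnd_cons]; simp only [QBF.bsize, ih, List.map_cons, List.sum_cons,
      List.length_cons]; omega

theorem foldr_bexi_bsize {V : Type} (p : ℕ) (T : QBF (ℕ × V)) (l : List V) :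
    (l.foldr (fun y acc => QBF.bexi (p, y) acc) T).bsize = T.bsize + l.length := by
  induction l with
  | nil => simp
  | cons a l ih => simp only [List.foldr_cons, QBF.bsize, ih, List.length_cons]; omega

theorem map_sum_le {γ : Type} (l : List γ) (f g : γ → ℕ) (h : ∀ y ∈ l, f y ≤ g y) :
    (l.map f).sum ≤ (l.map g).sum := by
  induction l with
  | nil => simp
  | cons a l ih =>
    simp only [List.map_cons, List.sum_cons]
    exact Nat.add_le_add (h a (by simp)) (ih fun y hy => h y (by simp [hy]))

theorem map_sum_add {γ : Type} (l : List γ) (f g : γ → ℕ) :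
    (l.map fun y => f y + g y).sum = (l.map f).sum + (l.map g).sum := by
  induction l with
  | nil => simp
  | cons a l ih => simp only [List.map_cons, List.sum_cons, ih]; omega

theorem map_sum_const {γ : Type} (l : List γ) (c : ℕ) :
    (l.map fun _ => c).sum = c * l.length := by
  induction l with
  | nil => simp
  | cons a l ih => simp only [List.map_cons, List.sum_cons, ih, List.length_cons]; ring

theorem map_sum_mul_const {γ : Type} (l : List γ) (f : γ → ℕ) (c : ℕ) :
    (l.map fun y => f y * c).sum = (l.map f).sum * c := by
  induction l with
  | nil => simp
  | cons a l ih => simp only [List.map_cons, List.sum_cons, ih]; ring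

theorem map_sum_le_const {γ : Type} (l : List γ) (f : γ → ℕ) (c : ℕ)
    (h : ∀ y ∈ l, f y ≤ c) : (l.map f).sum ≤ c * l.length := by
  calc (l.map f).sum ≤ (l.map fun _ => c).sum := map_sum_le l f _ h
    _ = c * l.length := map_sum_const l c

variable {V : Type}

theorem succList_length_le [Fintype V] (K : Kripke ℕ V) (x : V) :
    (K.succList x).length ≤ Fintype.card V := by
  rw [Kripke.succList, Finset.length_toList]
  exact (Finset.card_filter_le _ _).trans (le_of_eq (Finset.card_univ))

theorem reachList_length_le [Fintype V] (K : Kripke ℕ V) (x : V) :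
    (K.reachList x).length ≤ Fintype.card V := by
  rw [Kripke.reachList, Finset.length_toList]
  exact (Finset.card_filter_le _ _).trans (le_of_eq (Finset.card_univ))

theorem reachList_nodup [Fintype V] (K : Kripke ℕ V) (x : V) :
    (K.reachList x).Nodup := Finset.nodup_toList _

theorem sum_deg_le [Fintype V] (K : Kripke ℕ V) (l : List V) (hl : l.Nodup) :
    (l.map fun y => (K.succList y).length).sum ≤ edgeCard K := by
  have h1 : (l.map fun y => (K.succList y).length).sum
      = ∑ y ∈ l.toFinset, (K.succList y).length := (List.sum_toFinset _ hl).symm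
  rw [h1]
  refine (Finset.sum_le_sum_of_subset (Finset.subset_univ _)).trans ?_
  rw [edgeCard, Finset.card_eq_sum_card_fiberwise
    (f := Prod.fst) (t := Finset.univ) (fun x _ => Finset.mem_univ _)]
  refine le_of_eq (Finset.sum_congr rfl fun y _ => ?_)
  rw [Kripke.succList, Finset.length_toList]
  have hset : ((Finset.univ.filter fun e : V × V => K.E e.1 e.2).filter fun e => e.1 = y)
      = (Finset.univ.filter fun u => K.E y u).map
        ⟨fun u => (y, u), fun a b h => by simpa using (Prod.mk.injEq y a y b ▸ h : (y,a) = (y,b))⟩ := by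
    ext ⟨a, b⟩
    simp only [Finset.mem_filter, Finset.mem_univ, true_and, Finset.mem_map,
      Function.Embedding.coeFn_mk]
    constructor
    · rintro ⟨hE, rfl⟩
      exact ⟨b, by simpa using hE, rfl⟩
    · rintro ⟨u, hu, heq⟩
      obtain ⟨rfl, rfl⟩ := Prod.mk.injEq _ _ _ _ |>.mp heq.symm
      exact ⟨by simpa using hu, rfl⟩
  rw [hset, Finset.card_map]

/-- Pointwise and summed size bounds for the translation of an `AGF` formula. -/
noncomputable def pwsb (N M : ℕ) : AGF ℕ → ℕ × ℕ
  | .atom _ => (1, N)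
  | .aneg φ => ((pwsb N M φ).1 + 1, (pwsb N M φ).2 + N)
  | .aor φ ψ => ((pwsb N M φ).1 + (pwsb N M ψ).1 + 1,
      (pwsb N M φ).2 + (pwsb N M ψ).2 + N)
  | .aEX φ => (N * (pwsb N M φ).1 + N + 1, M * (pwsb N M φ).1 + M + N)
  | .aAG φ => ((pwsb N M φ).2 + N + 1, N * ((pwsb N M φ).2 + N + 1))
  | .aexi _ φ => ((pwsb N M φ).1 + N, (pwsb N M φ).2 + N * N)

theorem hat_atom_bsize [Fintype V] (K : Kripke ℕ V) (p : ℕ) (x : V) (P : Set ℕ) :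
    (hatAG K (AGF.atom p) x P).bsize = 1 := by
  by_cases h1 : p ∈ P
  · simp [hatAG, h1, QBF.bsize]
  · by_cases h2 : p ∈ K.label x <;> simp [hatAG, h1, h2, QBF.bsize]

theorem hat_le_pwsb [Fintype V] (K : Kripke ℕ V) (ξ : AGF ℕ) :
    (∀ (x : V) (P : Set ℕ),
      (hatAG K ξ x P).bsize ≤ (pwsb (Fintype.card V) (edgeCard K) ξ).1) ∧
    (∀ (l : List V), l.Nodup → ∀ P : Set ℕ,
      (l.map fun y => (hatAG K ξ y P).bsize).sum ≤ (pwsb (Fintype.card V) (edgeCard K) ξ).2) := by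
  set N := Fintype.card V with hN
  set M := edgeCard K with hM
  induction ξ with
  | atom p =>
    constructor
    · intro x P; rw [hat_atom_bsize]; simp [pwsb]
    · intro l hl P
      have := map_sum_le_const l (fun y => (hatAG K (AGF.atom p) y P).bsize) 1
        (fun y _ => le_of_eq (hat_atom_bsize K p y P))
      have h2 := hl.length_le_card
      simp only [pwsb]
      omega
  | aneg φ ih =>
    constructor
    · intro x P
      have := ih.1 x P
      simp only [hatAG, QBF.bsize, pwsb]
      omega
    · intro l hl P
      simp only [hatAG, QBF.bsize, pwsb]
      rw [map_sum_add l (fun y => (hatAG K φ y P).bsize) (fun _ => 1)]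
      have h1 := ih.2 l hl P
      have h2 := map_sum_const l 1
      have h3 := hl.length_le_card
      omega
  | aor φ ψ ih1 ih2 =>
    constructor
    · intro x P
      have := ih1.1 x P
      have := ih2.1 x P
      simp only [hatAG, QBF.bsize, pwsb]
      omega
    · intro l hl P
      simp only [hatAG, QBF.bsize, pwsb]
      rw [map_sum_add l (fun y => (hatAG K φ y P).bsize + (hatAG K ψ y P).bsize) (fun _ => 1),
        map_sum_add l (fun y => (hatAG K φ y P).bsize) (fun y => (hatAG K ψ y P).bsize)]
      have h1 := ih1.2 l hl P
      have h2 := ih2.2 l hl P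
      have h3 := map_sum_const l 1
      have h4 := hl.length_le_card
      omega
  | aEX φ ih =>
    constructor
    · intro x P
      show (QBF.bigOr _ _).bsize ≤ _
      rw [bigOr_bsize]
      simp only [pwsb]
      have h1 : ((K.succList x).map fun y => (hatAG K φ y P).bsize).sum
          ≤ (pwsb N M φ).1 * (K.succList x).length :=
        map_sum_le_const _ _ _ (fun u _ => ih.1 u P)
      have h2 := succList_length_le K x
      have h3 : (pwsb N M φ).1 * (K.succList x).length ≤ (pwsb N M φ).1 * N :=
        Nat.mul_le_mul_left _ h2
      have h4 : (pwsb N M φ).1 * N = N * (pwsb N M φ).1 := Nat.mul_comm _ _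
      exact Nat.add_le_add (Nat.add_le_add ((h1.trans h3).trans (le_of_eq h4)) h2) le_rfl
    · intro l hl P
      simp only [pwsb]
      have hterm : ∀ y ∈ l, (hatAG K (AGF.aEX φ) y P).bsize
          ≤ (K.succList y).length * (pwsb N M φ).1 + (K.succList y).length + 1 := by
        intro y _
        show (QBF.bigOr _ _).bsize ≤ _
        rw [bigOr_bsize]
        have h1 : ((K.succList y).map fun u => (hatAG K φ u P).bsize).sum
            ≤ (pwsb N M φ).1 * (K.succList y).length :=
          map_sum_le_const _ _ _ (fun u _ => ih.1 u P)
        exact Nat.add_le_add (Nat.add_le_add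
          (h1.trans (le_of_eq (Nat.mul_comm _ _))) le_rfl) le_rfl
      refine (map_sum_le l _ _ hterm).trans ?_
      rw [map_sum_add l (fun y => (K.succList y).length * (pwsb N M φ).1 + (K.succList y).length)
        (fun _ => 1),
        map_sum_add l (fun y => (K.succList y).length * (pwsb N M φ).1)
          (fun y => (K.succList y).length),
        map_sum_mul_const l (fun y => (K.succList y).length) (pwsb N M φ).1]
      have h1 := sum_deg_le K l hl
      have h2 : (l.map fun y => (K.succList y).length).sum * (pwsb N M φ).1
          ≤ M * (pwsb N M φ).1 := Nat.mul_le_mul_right _ h1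
      have h3 := map_sum_const l 1
      have h4 := hl.length_le_card
      omega
  | aAG φ ih =>
    have hpt : ∀ (x : V) (P : Set ℕ),
        (hatAG K (AGF.aAG φ) x P).bsize ≤ (pwsb N M φ).2 + N + 1 := by
      intro x P
      show (QBF.bigAnd _ _).bsize ≤ _
      rw [bigAnd_bsize]
      exact Nat.add_le_add (Nat.add_le_add (ih.2 _ (reachList_nodup K x) P)
        (reachList_length_le K x)) le_rfl
    constructor
    · intro x P
      simpa [pwsb] using hpt x P
    · intro l hl P
      simp only [pwsb]
      have := map_sum_le_const l _ ((pwsb N M φ).2 + N + 1) (fun y _ => hpt y P)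
      have h2 := hl.length_le_card
      have h3 : ((pwsb N M φ).2 + N + 1) * l.length ≤ ((pwsb N M φ).2 + N + 1) * N :=
        Nat.mul_le_mul_left _ h2
      have h4 : ((pwsb N M φ).2 + N + 1) * N = N * ((pwsb N M φ).2 + N + 1) :=
        Nat.mul_comm _ _
      omega
  | aexi p φ ih =>
    have hpt : ∀ (x : V) (P : Set ℕ),
        (hatAG K (AGF.aexi p φ) x P).bsize ≤ (pwsb N M φ).1 + N := by
      intro x P
      simp only [hatAG]
      rw [foldr_bexi_bsize]
      have h1 := ih.1 x (insert p P)
      have h2 : (Finset.univ.toList (α := V)).length = N := by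
        rw [Finset.length_toList, Finset.card_univ]
      omega
    constructor
    · intro x P
      simpa [pwsb] using hpt x P
    · intro l hl P
      simp only [pwsb]
      have hterm : ∀ y ∈ l, (hatAG K (AGF.aexi p φ) y P).bsize
          ≤ (hatAG K φ y (insert p P)).bsize + N := by
        intro y _
        simp only [hatAG]
        rw [foldr_bexi_bsize]
        have h2 : (Finset.univ.toList (α := V)).length = N := by
          rw [Finset.length_toList, Finset.card_univ]
        omega
      refine (map_sum_le l _ _ hterm).trans ?_
      rw [map_sum_add l (fun y => (hatAG K φ y (insert p P)).bsize) (fun _ => N)]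
      have h1 := ih.2 l hl (insert p P)
      have h2 := map_sum_const l N
      have h3 := hl.length_le_card
      have h4 : N * l.length ≤ N * N := Nat.mul_le_mul_left _ h3
      omega

end Part5


section Part5b

theorem qsize_pos (φ : QCTL ℕ) : 1 ≤ φ.qsize := by
  cases φ <;> simp [QCTL.qsize]

theorem pwsb_bool {α : QCTL ℕ} (h : BoolAtoms α) (N M : ℕ) :
    (pwsb N M (FPC α)).1 ≤ α.qsize ∧ (pwsb N M (FPC α)).2 ≤ N * α.qsize := by
  induction h with
  | atom p => constructor <;> simp [FPC, pwsb, QCTL.qsize]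
  | @qneg φ _ ih =>
    obtain ⟨ih1, ih2⟩ := ih
    simp only [FPC, pwsb, QCTL.qsize]
    have e : N * (φ.qsize + 1) = N * φ.qsize + N := by ring
    omega
  | @qor φ ψ _ _ iha ihb =>
    obtain ⟨iha1, iha2⟩ := iha
    obtain ⟨ihb1, ihb2⟩ := ihb
    simp only [FPC, pwsb, QCTL.qsize]
    have e : N * (φ.qsize + ψ.qsize + 1) = N * φ.qsize + N * ψ.qsize + N := by ring
    omega

theorem pwsb_basic {θ : QCTL ℕ} (h : BasicCTL θ) (N M : ℕ) (hN : 1 ≤ N) :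
    (pwsb N M (FPC θ)).1 ≤ 40 * ((N + M) * θ.qsize) ∧
    (pwsb N M (FPC θ)).2 ≤ 40 * (N * ((N + M) * θ.qsize)) := by
  cases h with
  | @qEX α hα =>
    obtain ⟨h1, h2⟩ := pwsb_bool hα N M
    have hq := qsize_pos α
    simp only [FPC, pwsb, QCTL.qsize]
    have k1 : M * (pwsb N M (FPC α)).1 ≤ M * α.qsize := Nat.mul_le_mul_left M h1
    have k2 : M * α.qsize ≤ N * (M * α.qsize) := Nat.le_mul_of_pos_left _ hN
    have k3 : M ≤ N * M := Nat.le_mul_of_pos_left _ hN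
    have k4 : N ≤ N * N := Nat.le_mul_of_pos_left _ hN
    constructor
    · nlinarith [h1, hN, hq]
    · nlinarith [h1, hN, hq, k1, k2, k3, k4]
  | @qEU α β hα hβ =>
    obtain ⟨ha1, ha2⟩ := pwsb_bool hα N M
    obtain ⟨hb1, hb2⟩ := pwsb_bool hβ N M
    have hqa := qsize_pos α
    have hqb := qsize_pos β
    simp only [FPC, AGF.aall, AGF.aimp, AGF.aiff, AGF.aand, AGF.aAX, pwsb, QCTL.qsize]
    constructor
    · nlinarith [ha2, hb2, hN, hqa, hqb]
    · nlinarith [ha2, hb2, hN, hqa, hqb]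
  | @qAU α β hα hβ =>
    obtain ⟨ha1, ha2⟩ := pwsb_bool hα N M
    obtain ⟨hb1, hb2⟩ := pwsb_bool hβ N M
    have hqa := qsize_pos α
    have hqb := qsize_pos β
    simp only [FPC, AGF.aall, AGF.aimp, AGF.aiff, AGF.aand, AGF.aAX, pwsb, QCTL.qsize]
    constructor
    · nlinarith [ha2, hb2, hN, hqa, hqb]
    · nlinarith [ha2, hb2, hN, hqa, hqb]

theorem pwsb_bcb {Φ0 : QCTL ℕ} (h : BoolCombBasic Φ0) (N M : ℕ) (hN : 1 ≤ N) :
    (pwsb N M (FPC Φ0)).1 ≤ 40 * (N * ((N + M) * Φ0.qsize)) := by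
  induction h with
  | @basic θ hθ =>
    have h1 := (pwsb_basic hθ N M hN).1
    have hq := qsize_pos θ
    nlinarith [h1, hN, hq]
  | atom p =>
    simp only [FPC, pwsb, QCTL.qsize]
    nlinarith [hN]
  | @qneg φ _ ih =>
    have hq := qsize_pos φ
    simp only [FPC, pwsb, QCTL.qsize]
    nlinarith [ih, hN, hq]
  | @qor φ ψ _ _ iha ihb =>
    have hqa := qsize_pos φ
    have hqb := qsize_pos ψ
    simp only [FPC, pwsb, QCTL.qsize]
    nlinarith [iha, ihb, hN, hqa, hqb]

theorem pwsb_conj {θ : QCTL ℕ} (hθ : BasicCTL θ) (κ : ℕ) (N M : ℕ) (hN : 1 ≤ N) :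
    (pwsb N M (FPC (QCTL.qAG (QCTL.qiff (QCTL.atom κ) θ)))).1 ≤
      250 * (N * ((N + M) * (QCTL.qAG (QCTL.qiff (QCTL.atom κ) θ)).qsize)) := by
  have h2 := (pwsb_basic hθ N M hN).2
  have hq := qsize_pos θ
  simp only [QCTL.qAG, QCTL.qEF, QCTL.qtop, QCTL.qiff, QCTL.qand, QCTL.qimp, FPC,
    AGF.aall, AGF.aimp, AGF.aiff, AGF.aand, AGF.aAX, pwsb, QCTL.qsize]
  nlinarith [h2, hN, hq]

theorem pwsb_qand {a b : QCTL ℕ} (N M C : ℕ) (hC : 1 ≤ C) (hN : 1 ≤ N)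
    (ha : (pwsb N M (FPC a)).1 ≤ C * (N * ((N + M) * a.qsize)))
    (hb : (pwsb N M (FPC b)).1 ≤ C * (N * ((N + M) * b.qsize))) :
    (pwsb N M (FPC (a.qand b))).1 ≤ C * (N * ((N + M) * (a.qand b).qsize)) := by
  simp only [QCTL.qand, FPC, pwsb, QCTL.qsize]
  have hpos : 0 < C * (N * (N + M)) := Nat.mul_pos hC (Nat.mul_pos hN (by omega))
  nlinarith [ha, hb, hC, hN, hpos]

theorem pwsb_conjList (N M C : ℕ) (hC : 1 ≤ C) (hN : 1 ≤ N) (L : List (QCTL ℕ))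
    (base : QCTL ℕ)
    (hbase : (pwsb N M (FPC base)).1 ≤ C * (N * ((N + M) * base.qsize)))
    (hL : ∀ c ∈ L, (pwsb N M (FPC c)).1 ≤ C * (N * ((N + M) * c.qsize))) :
    (pwsb N M (FPC (conjList L base))).1 ≤ C * (N * ((N + M) * (conjList L base).qsize)) := by
  induction L with
  | nil => exact hbase
  | cons a L ih =>
    show (pwsb N M (FPC (a.qand (conjList L base)))).1 ≤ _
    exact pwsb_qand N M C hC hN (hL a (by simp))
      (ih (fun c hc => hL c (by simp [hc])))

theorem pwsb_prefixQ (N M C : ℕ) (hC : 1 ≤ C) (hN : 1 ≤ N) (Q : List (Bool × ℕ))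
    (body : QCTL ℕ)
    (hbody : (pwsb N M (FPC body)).1 ≤ C * (N * ((N + M) * body.qsize))) :
    (pwsb N M (FPC (prefixQ Q body))).1 ≤ C * (N * ((N + M) * (prefixQ Q body).qsize)) := by
  induction Q with
  | nil => exact hbody
  | cons bp Q ih =>
    rcases bp with ⟨b, p⟩
    have hq := qsize_pos (prefixQ Q body)
    have hpos : 0 < C * (N * (N + M)) := Nat.mul_pos hC (Nat.mul_pos hN (by omega))
    have hNle : N ≤ C * (N * (N + M)) :=
      (Nat.le_mul_of_pos_right N (by omega)).trans (Nat.le_mul_of_pos_left _ hC)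
    cases b
    · have e : prefixQ ((false, p) :: Q) body = QCTL.qall p (prefixQ Q body) := by
        simp [prefixQ]
      rw [e]
      simp only [QCTL.qall, FPC, pwsb, QCTL.qsize]
      nlinarith [ih, hC, hN, hq, hpos, hNle]
    · have e : prefixQ ((true, p) :: Q) body = QCTL.qexi p (prefixQ Q body) := by
        simp [prefixQ]
      rw [e]
      simp only [FPC, pwsb, QCTL.qsize]
      nlinarith [ih, hC, hN, hq, hpos, hNle]

theorem pwsb_flat {Ψ : QCTL ℕ} (hflat : IsFlat Ψ) (N M : ℕ) (hN : 1 ≤ N) :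
    (pwsb N M (FPC Ψ)).1 ≤ 250 * (N * ((N + M) * Ψ.qsize)) := by
  obtain ⟨Q, m, κ, Φ0, θ, hΦ0, hθ, rfl⟩ := hflat
  refine pwsb_prefixQ N M 250 (by omega) hN Q _ ?_
  refine pwsb_conjList N M 250 (by omega) hN _ _ ?_ ?_
  · have := pwsb_bcb hΦ0 N M hN
    have h40 : 40 * (N * ((N + M) * Φ0.qsize)) ≤ 250 * (N * ((N + M) * Φ0.qsize)) :=
      Nat.mul_le_mul_right _ (by omega)
    omega
  · intro c hc
    simp only [List.mem_map] at hc
    obtain ⟨i, _, rfl⟩ := hc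
    exact pwsb_conj (hθ i) (κ i) N M hN

end Part5b

/-- Correctness and size of the flat fixed-point reduction (method FPF): for any flat
formula `Ψ` equivalent to `Φ` (of size linear in `|Φ|`, with linearity constant `C1`),
the QBF formula `FPC(Ψ)^{x,∅}` is valid iff `K,x ⊨ Φ`, and its size is in
`O(|V|·(|V|+|E|)·|Φ|)`. -/
theorem fpf_correct (C1 : ℕ) :
    ∃ C2 : ℕ,
      ∀ (V : Type) [Fintype V] (K : Kripke ℕ V) (x : V) (Φ Ψ : QCTL ℕ),
        IsFlat Ψ → QEquiv Φ Ψ → Ψ.qsize ≤ C1 * Φ.qsize →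
        (((hatAG K (FPC Ψ) x ∅).valid ↔ Φ.sat K x) ∧
          (hatAG K (FPC Ψ) x ∅).bsize ≤
            C2 * (Fintype.card V * ((Fintype.card V + edgeCard K) * Φ.qsize))) := by
  refine ⟨250 * C1 + 250, ?_⟩
  intro V _ K x Φ Ψ hflat hequiv hsize
  have hN : 1 ≤ Fintype.card V := Fintype.card_pos_iff.mpr ⟨x⟩
  constructor
  · exact (main_correct K Ψ x).trans (hequiv V K x).symm
  · have h1 := (hat_le_pwsb K (FPC Ψ)).1 x ∅
    have h2 := pwsb_flat hflat (Fintype.card V) (edgeCard K) hN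
    have h3 : 250 * (Fintype.card V * ((Fintype.card V + edgeCard K) * Ψ.qsize))
        ≤ 250 * (Fintype.card V * ((Fintype.card V + edgeCard K) * (C1 * Φ.qsize))) :=
      Nat.mul_le_mul_left _ (Nat.mul_le_mul_left _ (Nat.mul_le_mul_left _ hsize))
    calc (hatAG K (FPC Ψ) x ∅).bsize
        ≤ (pwsb (Fintype.card V) (edgeCard K) (FPC Ψ)).1 := h1
      _ ≤ 250 * (Fintype.card V * ((Fintype.card V + edgeCard K) * Ψ.qsize)) := h2
      _ ≤ 250 * (Fintype.card V * ((Fintype.card V + edgeCard K) * (C1 * Φ.qsize))) := h3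
      _ = (250 * C1) * (Fintype.card V * ((Fintype.card V + edgeCard K) * Φ.qsize)) := by
          ring
      _ ≤ (250 * C1 + 250) * (Fintype.card V * ((Fintype.card V + edgeCard K) * Φ.qsize)) :=
          Nat.mul_le_mul_right _ (by omega)
end Paths
end

section
/- Implication versus equivalence in flat NNF formulas: let Ψ = ∃{κ_1,…,κ_m}.( Φ_0 ∧ ⋀_{i=1..m} AG( κ_i → θ_i ) ) and Ψ̃ = ∃{κ_1,…,κ_m}.( Φ_0 ∧ ⋀_{i=1..m} AG( κ_i ↔ θ_i ) ), where Φ_0 and the θ_i are QCTL formulas in negation normal form, the κ_i are fresh atomic propositions, and each κ_i occurs in Φ_0 and in the θ_j only positively (never in the scope of a negation), its only other occurrence being as the left-hand side of AG( κ_i → θ_i ). Then Ψ ≡ Ψ̃. -/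
open Classical

variable {AP V : Type}

namespace QCTL
/-- Weak until: `E φ W ψ := ¬ A(¬ψ) U (¬ψ ∧ ¬φ)`. -/
def qEW {AP : Type} (φ ψ : QCTL AP) : QCTL AP :=
  qneg (qAU (qneg ψ) (qand (qneg ψ) (qneg φ)))
/-- Weak until: `A φ W ψ := ¬ E(¬ψ) U (¬ψ ∧ ¬φ)`. -/
def qAW {AP : Type} (φ ψ : QCTL AP) : QCTL AP :=
  qneg (qEU (qneg ψ) (qand (qneg ψ) (qneg φ)))
end QCTL

/-- Negation normal form: negation is applied only to atomic propositions; formulas are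
built from literals, `∧`, `∨`, the modalities `EX`, `AX`, `EU`, `AU`, `EW`, `AW`, and
propositional quantifiers. -/
inductive IsNNF {AP : Type} : QCTL AP → Prop where
  | atom (p : AP) : IsNNF (QCTL.atom p)
  | natom (p : AP) : IsNNF (QCTL.qneg (QCTL.atom p))
  | qand {φ ψ} : IsNNF φ → IsNNF ψ → IsNNF (QCTL.qand φ ψ)
  | qor {φ ψ} : IsNNF φ → IsNNF ψ → IsNNF (QCTL.qor φ ψ)
  | qEX {φ} : IsNNF φ → IsNNF (QCTL.qEX φ)
  | qAX {φ} : IsNNF φ → IsNNF (QCTL.qAX φ)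
  | qEU {φ ψ} : IsNNF φ → IsNNF ψ → IsNNF (QCTL.qEU φ ψ)
  | qAU {φ ψ} : IsNNF φ → IsNNF ψ → IsNNF (QCTL.qAU φ ψ)
  | qEW {φ ψ} : IsNNF φ → IsNNF ψ → IsNNF (QCTL.qEW φ ψ)
  | qAW {φ ψ} : IsNNF φ → IsNNF ψ → IsNNF (QCTL.qAW φ ψ)
  | qexi (p : AP) {φ} : IsNNF φ → IsNNF (QCTL.qexi p φ)
  | qall (p : AP) {φ} : IsNNF φ → IsNNF (QCTL.qall p φ)

/-- `(φ.polarity p).1` holds iff every (free) occurrence of `p` in `φ` is positive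
(not in the scope of an odd number of negations); `(φ.polarity p).2` holds iff every
such occurrence is negative. -/
noncomputable def QCTL.polarity {AP : Type} (p : AP) : QCTL AP → Prop × Prop
  | .atom q => (True, q ≠ p)
  | .qneg φ => ((φ.polarity p).2, (φ.polarity p).1)
  | .qor φ ψ => ((φ.polarity p).1 ∧ (ψ.polarity p).1, (φ.polarity p).2 ∧ (ψ.polarity p).2)
  | .qEX φ => φ.polarity p
  | .qEU φ ψ => ((φ.polarity p).1 ∧ (ψ.polarity p).1, (φ.polarity p).2 ∧ (ψ.polarity p).2)
  | .qAU φ ψ => ((φ.polarity p).1 ∧ (ψ.polarity p).1, (φ.polarity p).2 ∧ (ψ.polarity p).2)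
  | .qexi q φ => if q = p then (True, True) else φ.polarity p

/-- `p` occurs only positively in `φ` (never in the scope of a negation). -/
def QCTL.OnlyPos {AP : Type} (p : AP) (φ : QCTL AP) : Prop := (φ.polarity p).1

/-- The body `Φ₀ ∧ ⋀_{i=1..m} AG( κᵢ → θᵢ )` (implication version). -/
def flatBodyImp {AP : Type} [Inhabited AP] (m : ℕ) (κ : Fin m → AP)
    (Φ0 : QCTL AP) (θ : Fin m → QCTL AP) : QCTL AP :=
  conjList
    ((List.finRange m).map fun i => QCTL.qAG (QCTL.qimp (QCTL.atom (κ i)) (θ i)))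
    Φ0

section AuxLemmas

variable {AP V : Type}

lemma Kripke.ext'_s9 {K₁ K₂ : Kripke AP V} (hE : K₁.E = K₂.E)
    (hl : K₁.label = K₂.label) : K₁ = K₂ := by
  cases K₁; cases K₂; simp_all

lemma qand_sat (φ ψ : QCTL AP) (K : Kripke AP V) (x : V) :
    (QCTL.qand φ ψ).sat K x ↔ φ.sat K x ∧ ψ.sat K x := by
  simp [QCTL.qand, QCTL.sat]

lemma qimp_sat (φ ψ : QCTL AP) (K : Kripke AP V) (x : V) :
    (QCTL.qimp φ ψ).sat K x ↔ (φ.sat K x → ψ.sat K x) := by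
  simp [QCTL.qimp, QCTL.sat]; tauto

lemma qiff_sat (φ ψ : QCTL AP) (K : Kripke AP V) (x : V) :
    (QCTL.qiff φ ψ).sat K x ↔ (φ.sat K x ↔ ψ.sat K x) := by
  simp [QCTL.qiff, qand_sat, qimp_sat]; tauto

lemma qtop_sat [Inhabited AP] (K : Kripke AP V) (x : V) :
    (QCTL.qtop : QCTL AP).sat K x := by
  simp [QCTL.qtop, QCTL.sat]; tauto

lemma qAG_sat [Inhabited AP] (φ : QCTL AP) (K : Kripke AP V) (x : V) :
    (QCTL.qAG φ).sat K x ↔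
      ∀ ρ : ℕ → V, ρ 0 = x → (∀ i, K.E (ρ i) (ρ (i + 1))) → ∀ i, φ.sat K (ρ i) := by
  constructor
  · intro h ρ h0 he i
    by_contra hne
    exact h ⟨ρ, h0, he, i, hne, fun j _ => qtop_sat K (ρ j)⟩
  · rintro h ⟨ρ, h0, he, i, hni, -⟩
    exact hni (h ρ h0 he i)

lemma conjList_sat (l : List (QCTL AP)) (b : QCTL AP) (K : Kripke AP V) (x : V) :
    (conjList l b).sat K x ↔ (∀ ψ ∈ l, ψ.sat K x) ∧ b.sat K x := by
  induction l with
  | nil => simp [conjList]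
  | cons a t ih =>
    simp [conjList, qand_sat] at *
    rw [ih]; tauto

noncomputable def knext (K : Kripke AP V) (v : V) : V := Classical.choose (K.serial v)

lemma knext_spec (K : Kripke AP V) (v : V) : K.E v (knext K v) :=
  Classical.choose_spec (K.serial v)

lemma exists_path_s9 (K : Kripke AP V) {x v : V} (h : Relation.ReflTransGen K.E x v) :
    ∃ ρ : ℕ → V, ρ 0 = x ∧ (∀ i, K.E (ρ i) (ρ (i + 1))) ∧ ∃ n, ρ n = v := by
  induction h using Relation.ReflTransGen.head_induction_on with
  | refl =>
    refine ⟨fun n => (knext K)^[n] v, rfl, fun i => ?_, 0, rfl⟩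
    show K.E ((knext K)^[i] v) ((knext K)^[i+1] v)
    rw [Function.iterate_succ_apply']
    exact knext_spec K _
  | @head a c hxy _ ih =>
    obtain ⟨ρ, h0, he, n, hn⟩ := ih
    refine ⟨fun i => Nat.casesOn i a (fun j => ρ j), rfl, fun i => ?_, n + 1, hn⟩
    cases i with
    | zero => simpa [h0] using hxy
    | succ j => exact he j

lemma qAG_reach [Inhabited AP] {φ : QCTL AP} {K : Kripke AP V} {x v : V}
    (h : (QCTL.qAG φ).sat K x) (hr : Relation.ReflTransGen K.E x v) : φ.sat K v := by
  obtain ⟨ρ, h0, he, n, hn⟩ := exists_path_s9 K hr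
  have := (qAG_sat φ K x).1 h ρ h0 he n
  rwa [hn] at this

lemma reach_of_path {K : Kripke AP V} {x : V} {ρ : ℕ → V} (h0 : ρ 0 = x)
    (he : ∀ i, K.E (ρ i) (ρ (i + 1))) (i : ℕ) : Relation.ReflTransGen K.E x (ρ i) := by
  induction i with
  | zero => rw [h0]
  | succ j ih => exact ih.tail (he j)

/-- Satisfaction only depends on labels of reachable states. -/
lemma sat_congr_reach (φ : QCTL AP) : ∀ (K₁ K₂ : Kripke AP V), K₁.E = K₂.E →
    ∀ x : V, (∀ v, Relation.ReflTransGen K₁.E x v →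
        ∀ r : AP, (r ∈ K₁.label v ↔ r ∈ K₂.label v)) →
    (φ.sat K₁ x ↔ φ.sat K₂ x) := by
  induction φ with
  | atom p =>
    intro K₁ K₂ hE x h
    exact h x Relation.ReflTransGen.refl p
  | qneg φ ih =>
    intro K₁ K₂ hE x h
    simp only [QCTL.sat]
    rw [ih K₁ K₂ hE x h]
  | qor φ ψ ihφ ihψ =>
    intro K₁ K₂ hE x h
    simp only [QCTL.sat]
    rw [ihφ K₁ K₂ hE x h, ihψ K₁ K₂ hE x h]
  | qEX φ ih =>
    intro K₁ K₂ hE x h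
    simp only [QCTL.sat]
    constructor
    · rintro ⟨y, hxy, hy⟩
      refine ⟨y, hE ▸ hxy, ?_⟩
      rw [← ih K₁ K₂ hE y (fun v hv r => h v (Relation.ReflTransGen.head hxy hv) r)]
      exact hy
    · rintro ⟨y, hxy, hy⟩
      have hxy₁ : K₁.E x y := hE ▸ hxy
      refine ⟨y, hxy₁, ?_⟩
      rw [ih K₁ K₂ hE y (fun v hv r => h v (Relation.ReflTransGen.head hxy₁ hv) r)]
      exact hy
  | qEU φ ψ ihφ ihψ =>
    intro K₁ K₂ hE x h
    simp only [QCTL.sat]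
    constructor
    · rintro ⟨ρ, h0, he, i, hψ, hφ⟩
      have hre : ∀ i, Relation.ReflTransGen K₁.E x (ρ i) := reach_of_path h0 he
      refine ⟨ρ, h0, fun i => hE ▸ he i, i, ?_, fun j hj => ?_⟩
      · rw [← ihψ K₁ K₂ hE (ρ i) (fun v hv r => h v ((hre i).trans hv) r)]; exact hψ
      · rw [← ihφ K₁ K₂ hE (ρ j) (fun v hv r => h v ((hre j).trans hv) r)]; exact hφ j hj
    · rintro ⟨ρ, h0, he, i, hψ, hφ⟩
      have he₁ : ∀ i, K₁.E (ρ i) (ρ (i + 1)) := fun i => hE ▸ he i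
      have hre : ∀ i, Relation.ReflTransGen K₁.E x (ρ i) := reach_of_path h0 he₁
      refine ⟨ρ, h0, he₁, i, ?_, fun j hj => ?_⟩
      · rw [ihψ K₁ K₂ hE (ρ i) (fun v hv r => h v ((hre i).trans hv) r)]; exact hψ
      · rw [ihφ K₁ K₂ hE (ρ j) (fun v hv r => h v ((hre j).trans hv) r)]; exact hφ j hj
  | qAU φ ψ ihφ ihψ =>
    intro K₁ K₂ hE x h
    simp only [QCTL.sat]
    constructor
    · intro hs ρ h0 he
      have he₁ : ∀ i, K₁.E (ρ i) (ρ (i + 1)) := fun i => hE ▸ he i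
      have hre : ∀ i, Relation.ReflTransGen K₁.E x (ρ i) := reach_of_path h0 he₁
      obtain ⟨i, hψ, hφ⟩ := hs ρ h0 he₁
      refine ⟨i, ?_, fun j hj => ?_⟩
      · rw [← ihψ K₁ K₂ hE (ρ i) (fun v hv r => h v ((hre i).trans hv) r)]; exact hψ
      · rw [← ihφ K₁ K₂ hE (ρ j) (fun v hv r => h v ((hre j).trans hv) r)]; exact hφ j hj
    · intro hs ρ h0 he
      have hre : ∀ i, Relation.ReflTransGen K₁.E x (ρ i) := reach_of_path h0 he
      obtain ⟨i, hψ, hφ⟩ := hs ρ h0 (fun i => hE ▸ he i)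
      refine ⟨i, ?_, fun j hj => ?_⟩
      · rw [ihψ K₁ K₂ hE (ρ i) (fun v hv r => h v ((hre i).trans hv) r)]; exact hψ
      · rw [ihφ K₁ K₂ hE (ρ j) (fun v hv r => h v ((hre j).trans hv) r)]; exact hφ j hj
  | qexi p φ ih =>
    intro K₁ K₂ hE x h
    simp only [QCTL.sat]
    constructor
    · rintro ⟨K₁', ⟨hE', hl'⟩, hs⟩
      refine ⟨⟨K₂.E, K₂.serial, fun v => {r | if r = p then r ∈ K₁'.label v else r ∈ K₂.label v}⟩,
        ⟨rfl, fun v q hq => by simp [hq]⟩, ?_⟩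
      rw [← ih K₁' _ (by simp [hE', hE]) x ?_]
      · exact hs
      · intro v hv r
        rw [hE'] at hv
        by_cases hr : r = p
        · simp [hr]
        · simp only [Set.mem_setOf_eq, if_neg hr]
          rw [hl' v r hr, h v hv r]
    · rintro ⟨K₂', ⟨hE', hl'⟩, hs⟩
      refine ⟨⟨K₁.E, K₁.serial, fun v => {r | if r = p then r ∈ K₂'.label v else r ∈ K₁.label v}⟩,
        ⟨rfl, fun v q hq => by simp [hq]⟩, ?_⟩
      rw [ih _ K₂' (by simp [hE', hE]) x ?_]
      · exact hs
      · intro v hv r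
        by_cases hr : r = p
        · simp [hr]
        · simp only [Set.mem_setOf_eq, if_neg hr]
          rw [hl' v r hr, h v hv r]

end AuxLemmas
section AuxLemmas2

variable {AP V : Type}

/-- Monotonicity of satisfaction w.r.t. enlarging the labelling on a set `S` of
atoms occurring only positively (resp. shrinking for only-negative atoms). -/
lemma sat_mono (φ : QCTL AP) : ∀ (S : Set AP) (K₁ K₂ : Kripke AP V),
    K₁.E = K₂.E →
    (∀ v r, r ∉ S → (r ∈ K₁.label v ↔ r ∈ K₂.label v)) →
    (∀ v r, r ∈ S → r ∈ K₁.label v → r ∈ K₂.label v) →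
    ∀ x : V, ((∀ p ∈ S, (φ.polarity p).1) → φ.sat K₁ x → φ.sat K₂ x) ∧
             ((∀ p ∈ S, (φ.polarity p).2) → φ.sat K₂ x → φ.sat K₁ x) := by
  induction φ with
  | atom q =>
    intro S K₁ K₂ hE hout hsub x
    constructor
    · intro _ hq
      by_cases hqS : q ∈ S
      · exact hsub x q hqS hq
      · exact (hout x q hqS).1 hq
    · intro hpol hq
      have hqS : q ∉ S := by
        intro hqS
        have := hpol q hqS
        simp [QCTL.polarity] at this
      exact (hout x q hqS).2 hq
  | qneg φ ih =>
    intro S K₁ K₂ hE hout hsub x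
    have := ih S K₁ K₂ hE hout hsub x
    constructor
    · intro hpol h1 h2
      exact h1 (this.2 (fun p hp => hpol p hp) h2)
    · intro hpol h2 h1
      exact h2 (this.1 (fun p hp => hpol p hp) h1)
  | qor φ ψ ihφ ihψ =>
    intro S K₁ K₂ hE hout hsub x
    have hφ := ihφ S K₁ K₂ hE hout hsub x
    have hψ := ihψ S K₁ K₂ hE hout hsub x
    constructor
    · rintro hpol (h | h)
      · exact Or.inl (hφ.1 (fun p hp => (hpol p hp).1) h)
      · exact Or.inr (hψ.1 (fun p hp => (hpol p hp).2) h)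
    · rintro hpol (h | h)
      · exact Or.inl (hφ.2 (fun p hp => (hpol p hp).1) h)
      · exact Or.inr (hψ.2 (fun p hp => (hpol p hp).2) h)
  | qEX φ ih =>
    intro S K₁ K₂ hE hout hsub x
    constructor
    · rintro hpol ⟨y, hxy, hy⟩
      exact ⟨y, hE ▸ hxy, (ih S K₁ K₂ hE hout hsub y).1 hpol hy⟩
    · rintro hpol ⟨y, hxy, hy⟩
      exact ⟨y, hE ▸ hxy, (ih S K₁ K₂ hE hout hsub y).2 hpol hy⟩
  | qEU φ ψ ihφ ihψ =>
    intro S K₁ K₂ hE hout hsub x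
    constructor
    · rintro hpol ⟨ρ, h0, he, i, hψ, hφ⟩
      exact ⟨ρ, h0, fun i => hE ▸ he i, i,
        (ihψ S K₁ K₂ hE hout hsub (ρ i)).1 (fun p hp => (hpol p hp).2) hψ,
        fun j hj => (ihφ S K₁ K₂ hE hout hsub (ρ j)).1 (fun p hp => (hpol p hp).1) (hφ j hj)⟩
    · rintro hpol ⟨ρ, h0, he, i, hψ, hφ⟩
      exact ⟨ρ, h0, fun i => hE ▸ he i, i,
        (ihψ S K₁ K₂ hE hout hsub (ρ i)).2 (fun p hp => (hpol p hp).2) hψ,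
        fun j hj => (ihφ S K₁ K₂ hE hout hsub (ρ j)).2 (fun p hp => (hpol p hp).1) (hφ j hj)⟩
  | qAU φ ψ ihφ ihψ =>
    intro S K₁ K₂ hE hout hsub x
    constructor
    · intro hpol hs ρ h0 he
      obtain ⟨i, hψ, hφ⟩ := hs ρ h0 (fun i => hE ▸ he i)
      exact ⟨i, (ihψ S K₁ K₂ hE hout hsub (ρ i)).1 (fun p hp => (hpol p hp).2) hψ,
        fun j hj => (ihφ S K₁ K₂ hE hout hsub (ρ j)).1 (fun p hp => (hpol p hp).1) (hφ j hj)⟩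
    · intro hpol hs ρ h0 he
      obtain ⟨i, hψ, hφ⟩ := hs ρ h0 (fun i => hE ▸ he i)
      exact ⟨i, (ihψ S K₁ K₂ hE hout hsub (ρ i)).2 (fun p hp => (hpol p hp).2) hψ,
        fun j hj => (ihφ S K₁ K₂ hE hout hsub (ρ j)).2 (fun p hp => (hpol p hp).1) (hφ j hj)⟩
  | qexi q φ ih =>
    intro S K₁ K₂ hE hout hsub x
    constructor
    · rintro hpol ⟨K₁', ⟨hE', hl'⟩, hs⟩
      refine ⟨⟨K₂.E, K₂.serial, fun v => {r | if r = q then r ∈ K₁'.label v else r ∈ K₂.label v}⟩,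
        ⟨rfl, fun v r hr => by simp [hr]⟩, ?_⟩
      refine (ih (S \ {q}) K₁' _ (by simp [hE', hE]) ?_ ?_ x).1 ?_ hs
      · intro v r hr
        by_cases hrq : r = q
        · simp [hrq]
        · have hrS : r ∉ S := by
            intro hrS; exact hr ⟨hrS, hrq⟩
          simp only [Set.mem_setOf_eq, if_neg hrq]
          rw [hl' v r hrq, hout v r hrS]
      · rintro v r ⟨hrS, hrq⟩ hrl
        have hrq' : r ≠ q := hrq
        simp only [Set.mem_setOf_eq, if_neg hrq']
        exact hsub v r hrS ((hl' v r hrq').1 hrl)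
      · rintro p ⟨hpS, hpq⟩
        have hqp : q ≠ p := fun h => hpq h.symm
        have := hpol p hpS
        simpa [QCTL.polarity, if_neg hqp] using this
    · rintro hpol ⟨K₂', ⟨hE', hl'⟩, hs⟩
      refine ⟨⟨K₁.E, K₁.serial, fun v => {r | if r = q then r ∈ K₂'.label v else r ∈ K₁.label v}⟩,
        ⟨rfl, fun v r hr => by simp [hr]⟩, ?_⟩
      refine (ih (S \ {q}) _ K₂' (by simp [hE', hE]) ?_ ?_ x).2 ?_ hs
      · intro v r hr
        by_cases hrq : r = q
        · simp [hrq]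
        · have hrS : r ∉ S := by
            intro hrS; exact hr ⟨hrS, hrq⟩
          simp only [Set.mem_setOf_eq, if_neg hrq]
          rw [hl' v r hrq, hout v r hrS]
      · rintro v r ⟨hrS, hrq⟩ hrl
        have hrq' : r ≠ q := hrq
        simp only [Set.mem_setOf_eq, if_neg hrq'] at hrl
        exact (hl' v r hrq').2 (hsub v r hrS hrl)
      · rintro p ⟨hpS, hpq⟩
        have hqp : q ≠ p := fun h => hpq h.symm
        have := hpol p hpS
        simpa [QCTL.polarity, if_neg hqp] using this

/-- Characterization of `exiMany`. -/
lemma exiMany_sat (l : List AP) (φ : QCTL AP) : ∀ (K : Kripke AP V) (x : V),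
    (exiMany l φ).sat K x ↔ ∃ K' : Kripke AP V, K'.E = K.E ∧
      (∀ v r, r ∉ l → (r ∈ K'.label v ↔ r ∈ K.label v)) ∧ φ.sat K' x := by
  induction l with
  | nil =>
    intro K x
    simp only [exiMany, List.foldr]
    constructor
    · intro h; exact ⟨K, rfl, fun v r _ => Iff.rfl, h⟩
    · rintro ⟨K', hE, hl, h⟩
      have : K' = K := by
        refine Kripke.ext'_s9 hE ?_
        funext v
        ext r
        exact hl v r List.not_mem_nil
      rwa [this] at h
  | cons p t ih =>
    intro K x
    show (QCTL.qexi p (exiMany t φ)).sat K x ↔ _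
    simp only [QCTL.sat]
    constructor
    · rintro ⟨K₁, ⟨hE₁, hl₁⟩, hs⟩
      obtain ⟨K', hE', hl', hs'⟩ := (ih K₁ x).1 hs
      refine ⟨K', hE'.trans hE₁, fun v r hr => ?_, hs'⟩
      have hrp : r ≠ p := fun h => hr (h ▸ (List.mem_cons_self : p ∈ p :: t))
      have hrt : r ∉ t := fun h => hr (List.mem_cons_of_mem p h)
      rw [hl' v r hrt, hl₁ v r hrp]
    · rintro ⟨K', hE', hl', hs'⟩
      refine ⟨⟨K.E, K.serial, fun v => {r | if r = p then r ∈ K'.label v else r ∈ K.label v}⟩,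
        ⟨rfl, fun v r hr => by simp [hr]⟩, ?_⟩
      refine (ih _ x).2 ⟨K', hE', fun v r hr => ?_, hs'⟩
      by_cases hrp : r = p
      · simp [hrp]
      · have hrl : r ∉ p :: t := by
          simp [hrp, hr]
        simp only [Set.mem_setOf_eq, if_neg hrp]
        exact hl' v r hrl

end AuxLemmas2
section MainAux

variable {AP V : Type}

/-- Replace the labelling of the atoms `κ i` by the sets `Λ i`. -/
noncomputable def kripkeOf (K1 : Kripke AP V) {m : ℕ} (κ : Fin m → AP)
    (Λ : Fin m → Set V) : Kripke AP V :=
  ⟨K1.E, K1.serial, fun v =>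
    {r | (∃ i, r = κ i ∧ v ∈ Λ i) ∨ (r ∉ Set.range κ ∧ r ∈ K1.label v)}⟩

lemma kripkeOf_kappa {K1 : Kripke AP V} {m : ℕ} {κ : Fin m → AP}
    (hinj : Function.Injective κ) (Λ : Fin m → Set V) (i : Fin m) (v : V) :
    κ i ∈ (kripkeOf K1 κ Λ).label v ↔ v ∈ Λ i := by
  simp only [kripkeOf, Set.mem_setOf_eq]
  constructor
  · rintro (⟨j, hj, hv⟩ | ⟨hnr, _⟩)
    · rwa [hinj hj]
    · exact absurd ⟨i, rfl⟩ hnr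
  · intro hv
    exact Or.inl ⟨i, rfl, hv⟩

lemma kripkeOf_notin {K1 : Kripke AP V} {m : ℕ} {κ : Fin m → AP}
    (Λ : Fin m → Set V) {r : AP} (hr : r ∉ Set.range κ) (v : V) :
    r ∈ (kripkeOf K1 κ Λ).label v ↔ r ∈ K1.label v := by
  simp only [kripkeOf, Set.mem_setOf_eq]
  constructor
  · rintro (⟨j, hj, _⟩ | ⟨_, h⟩)
    · exact absurd ⟨j, hj.symm⟩ hr
    · exact h
  · intro h
    exact Or.inr ⟨hr, h⟩

end MainAux
/-- Implication versus equivalence in flat NNF formulas: if `Φ₀` and the `θⱼ` are in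
negation normal form and each fresh `κᵢ` occurs only positively in them, then
`∃κ₁…κₘ.( Φ₀ ∧ ⋀ᵢ AG(κᵢ → θᵢ) )  ≡  ∃κ₁…κₘ.( Φ₀ ∧ ⋀ᵢ AG(κᵢ ↔ θᵢ) )`. -/
theorem flat_imp_iff_equiv {AP : Type} [Inhabited AP]
    (m : ℕ) (κ : Fin m → AP) (Φ0 : QCTL AP) (θ : Fin m → QCTL AP)
    (hκinj : Function.Injective κ)
    (hNNF0 : IsNNF Φ0) (hNNFθ : ∀ i, IsNNF (θ i))
    (hpos0 : ∀ i, Φ0.OnlyPos (κ i))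
    (hposθ : ∀ i j, (θ j).OnlyPos (κ i)) :
    QEquiv (exiMany ((List.finRange m).map κ) (flatBodyImp m κ Φ0 θ))
           (exiMany ((List.finRange m).map κ) (flatBody m κ Φ0 θ)) := by
  intro V _ K x
  have hlistmem : ∀ r : AP, r ∈ (List.finRange m).map κ ↔ r ∈ Set.range κ := by
    intro r; simp
  rw [exiMany_sat, exiMany_sat]
  constructor
  · rintro ⟨K1, hE1, hout1, hsat⟩
    unfold flatBodyImp at hsat
    rw [conjList_sat] at hsat
    obtain ⟨hAGs, hΦ0⟩ := hsat
    have hAG : ∀ i : Fin m, (QCTL.qAG (QCTL.qimp (QCTL.atom (κ i)) (θ i))).sat K1 x :=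
      fun i => hAGs _ (List.mem_map.mpr ⟨i, List.mem_finRange i, rfl⟩)
    set F : (Fin m → Set V) → (Fin m → Set V) :=
      fun Λ i => {v | (θ i).sat (kripkeOf K1 κ Λ) v} with hF
    have hKof_out : ∀ (Λ Λ' : Fin m → Set V) (v : V) (r : AP), r ∉ Set.range κ →
        (r ∈ (kripkeOf K1 κ Λ).label v ↔ r ∈ (kripkeOf K1 κ Λ').label v) := by
      intro Λ Λ' v r hr
      rw [kripkeOf_notin Λ hr, kripkeOf_notin Λ' hr]
    have hFmono : Monotone F := by
      intro Λ Λ' hle i v hv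
      refine (sat_mono (θ i) (Set.range κ) (kripkeOf K1 κ Λ) (kripkeOf K1 κ Λ') rfl
        (fun v r hr => hKof_out Λ Λ' v r hr) ?_ v).1 ?_ hv
      · rintro w r ⟨j, rfl⟩ hw
        rw [kripkeOf_kappa hκinj] at hw ⊢
        exact hle j hw
      · rintro p ⟨j, rfl⟩
        exact hposθ j i
    set Λ0 : Fin m → Set V :=
      fun i => {v | Relation.ReflTransGen K1.E x v ∧ κ i ∈ K1.label v} with hΛ0
    have hagree0 : ∀ v, Relation.ReflTransGen K1.E x v →
        ∀ r, (r ∈ K1.label v ↔ r ∈ (kripkeOf K1 κ Λ0).label v) := by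
      intro v hv r
      by_cases hr : r ∈ Set.range κ
      · obtain ⟨i, rfl⟩ := hr
        rw [kripkeOf_kappa hκinj]
        simp only [hΛ0, Set.mem_setOf_eq]
        exact ⟨fun h => ⟨hv, h⟩, fun h => h.2⟩
      · rw [kripkeOf_notin Λ0 hr]
    have hbase : Λ0 ≤ F Λ0 := by
      intro i v hv
      obtain ⟨hvreach, hκv⟩ := hv
      have hθ : (θ i).sat K1 v := (qimp_sat _ _ _ _).1 (qAG_reach (hAG i) hvreach) hκv
      have heq : (θ i).sat K1 v ↔ (θ i).sat (kripkeOf K1 κ Λ0) v :=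
        sat_congr_reach (θ i) K1 (kripkeOf K1 κ Λ0) rfl v (fun w hw r => hagree0 w (hvreach.trans hw) r)
      exact heq.1 hθ
    set G : (Fin m → Set V) →o (Fin m → Set V) :=
      ⟨fun Λ => Λ0 ⊔ F Λ, fun Λ Λ' hle => sup_le_sup le_rfl (hFmono hle)⟩ with hG
    set Λs := OrderHom.lfp G with hΛs
    have hfix : Λ0 ⊔ F Λs = Λs := G.map_lfp
    have hΛ0le : Λ0 ≤ Λs := le_sup_left.trans hfix.le
    have hfixF : F Λs = Λs := by
      have h1 : Λ0 ≤ F Λs := hbase.trans (hFmono hΛ0le)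
      exact (sup_eq_right.mpr h1).symm.trans hfix
    refine ⟨kripkeOf K1 κ Λs, hE1, ?_, ?_⟩
    · intro v r hr
      have hr' : r ∉ Set.range κ := fun h => hr ((hlistmem r).2 h)
      rw [kripkeOf_notin Λs hr', hout1 v r hr]
    · unfold flatBody
      rw [conjList_sat]
      constructor
      · intro ψ hψ
        obtain ⟨i, -, rfl⟩ := List.mem_map.1 hψ
        rw [qAG_sat]
        intro ρ h0 he n
        rw [qiff_sat]
        show κ i ∈ (kripkeOf K1 κ Λs).label (ρ n) ↔ _
        rw [kripkeOf_kappa hκinj]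
        have hmem : (θ i).sat (kripkeOf K1 κ Λs) (ρ n) ↔ ρ n ∈ F Λs i := Iff.rfl
        rw [hmem, hfixF]
      · have h1 : Φ0.sat (kripkeOf K1 κ Λ0) x :=
          (sat_congr_reach Φ0 K1 (kripkeOf K1 κ Λ0) rfl x hagree0).1 hΦ0
        refine (sat_mono Φ0 (Set.range κ) (kripkeOf K1 κ Λ0) (kripkeOf K1 κ Λs) rfl
          (fun v r hr => hKof_out Λ0 Λs v r hr) ?_ x).1 ?_ h1
        · rintro w r ⟨j, rfl⟩ hw
          rw [kripkeOf_kappa hκinj] at hw ⊢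
          exact hΛ0le j hw
        · rintro p ⟨j, rfl⟩
          exact hpos0 j
  · rintro ⟨K1, hE1, hout1, hsat⟩
    refine ⟨K1, hE1, hout1, ?_⟩
    unfold flatBody at hsat
    rw [conjList_sat] at hsat
    unfold flatBodyImp
    rw [conjList_sat]
    refine ⟨?_, hsat.2⟩
    intro ψ hψ
    obtain ⟨i, -, rfl⟩ := List.mem_map.1 hψ
    have h := hsat.1 _ (List.mem_map.mpr ⟨i, List.mem_finRange i, rfl⟩)
    rw [qAG_sat] at h ⊢
    intro ρ h0 he n
    rw [qimp_sat]
    have h2 := h ρ h0 he n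
    rw [qiff_sat] at h2
    exact h2.1
end
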